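/- arXiv:2107.11840 — 8 statements merged into one kernel-verified Lean document; each statement's English description precedes it below -/
import Mathlib

section
/- Let S = (s_i)_{i≥0} be a binary sequence and N a positive integer with N-th linear complexity L(S,N). If for some integer t > 0 one has binom(⌊N/2⌋, t) ≥ 2^{L(S,N)}, then there exists an integer k with 1 < k ≤ 2t such that S has a half peak in the aperiodic correlation measure of order k, i.e. C_k(S,N) ≥ N/2. -/
open Finset

/-- The first `N` terms of the binary sequence `s` satisfy a linear recurrence of order `L`
over `F₂`: `s (i+L) = c_{L-1} s (i+L-1) + … + c_0 s i` for `0 ≤ i < N - L`. -/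
def IsLinRecOn (s : ℕ → ZMod 2) (N L : ℕ) : Prop :=
  ∃ c : Fin L → ZMod 2, ∀ i, i + L < N → s (i + L) = ∑ j : Fin L, c j * s (i + j)

/-- The `N`th linear complexity of a binary sequence `s`: the smallest positive `L` such that
the first `N` terms satisfy a linear recurrence of order `L`, with the convention that it is `0`
when the first `N` terms all vanish. -/
noncomputable def linComplexity (s : ℕ → ZMod 2) (N : ℕ) : ℕ :=
  if ∀ i < N, s i = 0 then 0 else sInf {L | 0 < L ∧ IsLinRecOn s N L}

/-- The `N`th (aperiodic) correlation measure of order `k` of a binary sequence `s`: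
`max_{U,D} |∑_{n=0}^{U-1} (-1)^{s_{n+d₁}+…+s_{n+d_k}}|` over `U ≤ N - k + 1` and
`0 ≤ d₁ < … < d_k ≤ N - U`. -/
noncomputable def corr (s : ℕ → ZMod 2) (N k : ℕ) : ℕ :=
  sSup {m : ℕ | ∃ (U : ℕ) (d : Fin k → ℕ), U + k ≤ N + 1 ∧ StrictMono d ∧
    (∀ j, d j + U ≤ N) ∧
    m = (∑ n ∈ range U, (-1 : ℤ) ^ (∑ j : Fin k, (s (n + d j)).val)).natAbs}

/-- The periodic correlation measure of order `k` of a `T`-periodic binary sequence `s`: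
`max_D |∑_{n=0}^{T-1} (-1)^{s_{n+d₁}+…+s_{n+d_k}}|` over `0 ≤ d₁ < … < d_k < T`. -/
noncomputable def pcorr (s : ℕ → ZMod 2) (T k : ℕ) : ℕ :=
  sSup {m : ℕ | ∃ d : Fin k → ℕ, StrictMono d ∧ (∀ j, d j < T) ∧
    m = (∑ n ∈ range T, (-1 : ℤ) ^ (∑ j : Fin k, (s (n + d j)).val)).natAbs}

/-- The first `N` terms of `s` are generated by a (not necessarily linear) recurrence of
order `M`. -/
def IsMaxRecOn (s : ℕ → ZMod 2) (N M : ℕ) : Prop :=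
  ∃ f : (Fin M → ZMod 2) → ZMod 2, ∀ i, i + M < N → s (i + M) = f (fun j => s (i + j))

/-- The `N`th maximum-order complexity of a binary sequence `s`. -/
noncomputable def maxOrderComplexity (s : ℕ → ZMod 2) (N : ℕ) : ℕ :=
  sInf {M | 0 < M ∧ IsMaxRecOn s N M}

/-- In characteristic two, a sum over a symmetric difference equals the sum of the two sums. -/
lemma sum_symmDiff_zmod2 (A B : Finset ℕ) (f : ℕ → ZMod 2) :
    ∑ e ∈ symmDiff A B, f e = (∑ e ∈ A, f e) + ∑ e ∈ B, f e := by
  have h1 : symmDiff A B = (A \ B) ∪ (B \ A) := by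
    rw [symmDiff_def, Finset.sup_eq_union]
  rw [h1, Finset.sum_union disjoint_sdiff_sdiff]
  have h2 := Finset.sum_inter_add_sum_sdiff A B f
  have h3 := Finset.sum_inter_add_sum_sdiff B A f
  have h4 : A ∩ B = B ∩ A := Finset.inter_comm A B
  rw [h4] at h2
  have h5 : ∀ x : ZMod 2, x + x = 0 := fun x => CharTwo.add_self_eq_zero x
  linear_combination h2 + h3 - h5 (∑ e ∈ B ∩ A, f e)

/-- If a sum of shifts of `s` vanishes on the first `L` values and `s` satisfies a linear
recurrence of order `L` on its first `N` terms, then the sum of shifts vanishes on the whole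
admissible range. -/
lemma key_zero (s : ℕ → ZMod 2) (N L M : ℕ) (c : Fin L → ZMod 2)
    (hc : ∀ i, i + L < N → s (i + L) = ∑ j : Fin L, c j * s (i + j))
    (E : Finset ℕ) (hE : ∀ e ∈ E, e < M)
    (h0 : ∀ i, i < L → ∑ e ∈ E, s (i + e) = 0) :
    ∀ n, n + M ≤ N → ∑ e ∈ E, s (n + e) = 0 := by
  intro n
  induction n using Nat.strong_induction_on with
  | _ n ih =>
    intro hn
    rcases Nat.lt_or_ge n L with hlt | hge
    · exact h0 n hlt
    · obtain ⟨i, rfl⟩ : ∃ i, n = i + L := ⟨n - L, by omega⟩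
      calc ∑ e ∈ E, s (i + L + e)
          = ∑ e ∈ E, ∑ j : Fin L, c j * s (i + e + j) := by
            refine Finset.sum_congr rfl fun e he => ?_
            have h1 : (i + e) + L < N := by have := hE e he; omega
            have h2 : i + L + e = (i + e) + L := by ring
            rw [h2, hc (i + e) h1]
        _ = ∑ j : Fin L, ∑ e ∈ E, c j * s (i + e + j) := Finset.sum_comm
        _ = 0 := by
            refine Finset.sum_eq_zero fun j _ => ?_
            have hj := j.isLt
            have h3 : ∑ e ∈ E, s ((i + (j : ℕ)) + e) = 0 :=
              ih (i + (j : ℕ)) (by omega) (by omega)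
            calc ∑ e ∈ E, c j * s (i + e + j)
                = c j * ∑ e ∈ E, s ((i + (j : ℕ)) + e) := by
                  rw [Finset.mul_sum]
                  exact Finset.sum_congr rfl fun e _ => by rw [add_right_comm]
              _ = 0 := by rw [h3, mul_zero]

/-- If the sum of the shifts of `s` along a finite set `E` vanishes for the first `U` positions,
then the correlation measure of order `E.card` is at least `U`. -/
lemma corr_ge (s : ℕ → ZMod 2) (N : ℕ) (E : Finset ℕ) (U : ℕ)
    (hEN : ∀ e ∈ E, e + U ≤ N) (hUk : U + E.card ≤ N + 1)
    (h0 : ∀ n, n < U → ∑ e ∈ E, s (n + e) = 0) :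
    U ≤ corr s N E.card := by
  classical
  set k := E.card with hk
  let iso := E.orderIsoOfFin hk.symm
  set d : Fin k → ℕ := fun j => (iso j : ℕ) with hd
  have hmono : StrictMono d := fun a b hab => Subtype.coe_lt_coe.mpr (iso.strictMono hab)
  have hmem : ∀ j, d j ∈ E := fun j => (iso j).2
  have hsum : ∀ n, ∑ j : Fin k, s (n + d j) = ∑ e ∈ E, s (n + e) := by
    intro n
    rw [← Finset.sum_coe_sort E (fun e => s (n + e))]
    exact Fintype.sum_equiv iso.toEquiv _ _ (fun j => rfl)
  have hval : ∀ n, n < U → Even (∑ j : Fin k, (s (n + d j)).val) := by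
    intro n hn
    have h2 : ((∑ j : Fin k, (s (n + d j)).val : ℕ) : ZMod 2) = 0 := by
      push_cast
      simp only [ZMod.natCast_val, ZMod.cast_id]
      rw [hsum n, h0 n hn]
    rw [ZMod.natCast_eq_zero_iff] at h2
    exact even_iff_two_dvd.mpr h2
  have hS : (∑ n ∈ range U, (-1 : ℤ) ^ (∑ j : Fin k, (s (n + d j)).val)) = U := by
    rw [Finset.sum_congr rfl (fun n hn => (hval n (mem_range.mp hn)).neg_one_pow)]
    simp
  have hbdd : BddAbove {m : ℕ | ∃ (U' : ℕ) (d' : Fin k → ℕ), U' + k ≤ N + 1 ∧ StrictMono d' ∧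
      (∀ j, d' j + U' ≤ N) ∧
      m = (∑ n ∈ range U', (-1 : ℤ) ^ (∑ j : Fin k, (s (n + d' j)).val)).natAbs} := by
    refine ⟨N + 1, ?_⟩
    rintro m ⟨U', d', hU', -, -, rfl⟩
    have habs : |(∑ n ∈ range U', (-1 : ℤ) ^ (∑ j : Fin k, (s (n + d' j)).val))| ≤ (U' : ℤ) := by
      calc |(∑ n ∈ range U', (-1 : ℤ) ^ (∑ j : Fin k, (s (n + d' j)).val))|
          ≤ ∑ n ∈ range U', |(-1 : ℤ) ^ (∑ j : Fin k, (s (n + d' j)).val)| :=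
            Finset.abs_sum_le_sum_abs _ _
        _ = ∑ n ∈ range U', 1 := by
            refine Finset.sum_congr rfl fun n _ => ?_
            rw [abs_pow, abs_neg, abs_one, one_pow]
        _ = (U' : ℤ) := by simp
    have h6 : ((∑ n ∈ range U', (-1 : ℤ) ^ (∑ j : Fin k, (s (n + d' j)).val)).natAbs : ℤ)
        ≤ (U' : ℤ) := by rwa [← Int.abs_eq_natAbs]
    have h7 : (∑ n ∈ range U', (-1 : ℤ) ^ (∑ j : Fin k, (s (n + d' j)).val)).natAbs ≤ U' := by
      exact_mod_cast h6
    exact le_trans h7 (by omega)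
  have hin : U ∈ {m : ℕ | ∃ (U' : ℕ) (d' : Fin k → ℕ), U' + k ≤ N + 1 ∧ StrictMono d' ∧
      (∀ j, d' j + U' ≤ N) ∧
      m = (∑ n ∈ range U', (-1 : ℤ) ^ (∑ j : Fin k, (s (n + d' j)).val)).natAbs} :=
    ⟨U, d, hUk, hmono, fun j => hEN _ (hmem j), by rw [hS]; simp⟩
  exact le_csSup hbdd hin

/-- The linear complexity always carries a linear recurrence of its own order on `[0, N)`. -/
lemma linComplexity_rec (s : ℕ → ZMod 2) (N : ℕ) :
    ∃ c : Fin (linComplexity s N) → ZMod 2,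
      ∀ i, i + linComplexity s N < N → s (i + linComplexity s N) = ∑ j, c j * s (i + j) := by
  by_cases h0 : ∀ i < N, s i = 0
  · rw [show linComplexity s N = 0 by rw [linComplexity, if_pos h0]]
    refine ⟨fun j => j.elim0, fun i hi => ?_⟩
    simpa using h0 i (by omega)
  · have hne : {L | 0 < L ∧ IsLinRecOn s N L}.Nonempty := by
      refine ⟨N, ?_, fun _ => (0 : ZMod 2), fun i hi => absurd hi (by omega)⟩
      by_contra hN0
      exact h0 fun i hi => absurd hi (by omega)
    rw [show linComplexity s N = sInf {L | 0 < L ∧ IsLinRecOn s N L} by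
      rw [linComplexity, if_neg h0]]
    obtain ⟨-, c, hc⟩ := Nat.sInf_mem hne
    exact ⟨c, hc⟩

/-- **Aperiodic half-peak theorem.** If `C(⌊N/2⌋, t) ≥ 2^{L(S,N)}` for some `t > 0`, then `S`
has a half peak `C_k(S,N) ≥ N/2` in the aperiodic correlation measure of some order `k` with
`1 < k ≤ 2t`. -/
theorem aperiodic_half_peak (s : ℕ → ZMod 2) (N : ℕ) (hN : 0 < N) (t : ℕ) (ht : 0 < t)
    (h : 2 ^ linComplexity s N ≤ (N / 2).choose t) :
    ∃ k, 1 < k ∧ k ≤ 2 * t ∧ (N : ℝ) / 2 ≤ (corr s N k : ℝ) := by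
  classical
  set L := linComplexity s N with hLdef
  obtain ⟨c, hc⟩ := linComplexity_rec s N
  have htN : t ≤ N / 2 := by
    by_contra hlt
    have hpow : 0 < 2 ^ L := pow_pos (by norm_num) L
    rw [Nat.choose_eq_zero_of_lt (by omega)] at h
    omega
  have main : ∀ D1 D2 : Finset ℕ, D1.card = t → D2.card = t →
      (∀ e ∈ D1, e ≤ N / 2) → (∀ e ∈ D2, e ≤ N / 2) → D1 ≠ D2 →
      (∀ n, n + 1 + N / 2 ≤ N → ∑ e ∈ symmDiff D1 D2, s (n + e) = 0) →
      ∃ k, 1 < k ∧ k ≤ 2 * t ∧ (N : ℝ) / 2 ≤ (corr s N k : ℝ) := by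
    intro D1 D2 hc1 hc2 hb1 hb2 hne hz
    set E := symmDiff D1 D2 with hE
    have hsub : ∀ e ∈ E, e ≤ N / 2 := by
      intro e he
      rcases Finset.mem_symmDiff.mp he with ⟨h', -⟩ | ⟨h', -⟩
      exacts [hb1 e h', hb2 e h']
    have hkk : E.card = (D1 \ D2).card + (D2 \ D1).card := by
      rw [hE, symmDiff_def, Finset.sup_eq_union,
        Finset.card_union_of_disjoint disjoint_sdiff_sdiff]
    have hcomm : (D1 \ D2).card = (D2 \ D1).card :=
      Finset.card_sdiff_comm (hc1.trans hc2.symm)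
    have hpos : 0 < (D1 \ D2).card := by
      rcases Nat.eq_zero_or_pos (D1 \ D2).card with h0 | hp
      · exfalso
        have e1 : D1 \ D2 = ∅ := Finset.card_eq_zero.mp h0
        have hsubs : D1 ⊆ D2 := by rwa [Finset.sdiff_eq_empty_iff_subset] at e1
        exact hne (Finset.eq_of_subset_of_card_le hsubs (by omega))
      · exact hp
    have hk1 : 1 < E.card := by omega
    have hk2 : E.card ≤ 2 * t := by
      have l1 : (D1 \ D2).card ≤ t := hc1 ▸ Finset.card_le_card Finset.sdiff_subset
      have l2 : (D2 \ D1).card ≤ t := hc2 ▸ Finset.card_le_card Finset.sdiff_subset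
      omega
    have hksmall : E.card ≤ N / 2 + 1 := by
      have hss : E ⊆ Finset.range (N / 2 + 1) :=
        fun e he => Finset.mem_range.mpr (by have := hsub e he; omega)
      calc E.card ≤ (Finset.range (N / 2 + 1)).card := Finset.card_le_card hss
        _ = N / 2 + 1 := Finset.card_range _
    set U := N - N / 2 with hU
    have hdle : N / 2 ≤ N := Nat.div_le_self N 2
    have hcorr : U ≤ corr s N E.card := by
      apply corr_ge
      · intro e he; have := hsub e he; omega
      · omega
      · intro n hn; exact hz n (by omega)
    refine ⟨E.card, hk1, hk2, ?_⟩
    have hdm : N / 2 * 2 ≤ N := Nat.div_mul_le_self N 2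
    have hcastU : (N : ℝ) / 2 ≤ (U : ℝ) := by
      rw [hU, Nat.cast_sub hdle]
      have h2 : ((N / 2 : ℕ) : ℝ) ≤ (N : ℝ) / 2 := by
        rw [le_div_iff₀ (by norm_num : (0:ℝ) < 2)]
        exact_mod_cast hdm
      linarith
    calc (N : ℝ) / 2 ≤ (U : ℝ) := hcastU
      _ ≤ (corr s N E.card : ℝ) := by exact_mod_cast hcorr
  set F := Finset.powersetCard t (Finset.range (N / 2)) with hF
  have hFcard : F.card = (N / 2).choose t := by
    rw [hF, Finset.card_powersetCard, Finset.card_range]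
  set Φ : Finset ℕ → (Fin L → ZMod 2) := fun D i => ∑ e ∈ D, s ((i : ℕ) + e) with hPhi
  by_cases hcol : ∃ D1 ∈ F, ∃ D2 ∈ F, D1 ≠ D2 ∧ Φ D1 = Φ D2
  · obtain ⟨D1, hD1, D2, hD2, hne, heq⟩ := hcol
    obtain ⟨hsub1, hcard1⟩ := Finset.mem_powersetCard.mp hD1
    obtain ⟨hsub2, hcard2⟩ := Finset.mem_powersetCard.mp hD2
    refine main D1 D2 hcard1 hcard2
      (fun e he => by have := Finset.mem_range.mp (hsub1 he); omega)
      (fun e he => by have := Finset.mem_range.mp (hsub2 he); omega) hne ?_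
    have hEbound : ∀ e ∈ symmDiff D1 D2, e < N / 2 := by
      intro e he
      rcases Finset.mem_symmDiff.mp he with ⟨h', -⟩ | ⟨h', -⟩
      exacts [Finset.mem_range.mp (hsub1 h'), Finset.mem_range.mp (hsub2 h')]
    have h0 : ∀ i, i < L → ∑ e ∈ symmDiff D1 D2, s (i + e) = 0 := by
      intro i hi
      have hfe := congrFun heq ⟨i, hi⟩
      simp only [hPhi] at hfe
      rw [sum_symmDiff_zmod2, hfe]
      exact CharTwo.add_self_eq_zero _
    intro n hn
    exact key_zero s N L (N / 2) c hc _ hEbound h0 n (by omega)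
  · have hinj : Set.InjOn Φ F := by
      intro a ha b hb hab
      by_contra hne
      exact hcol ⟨a, ha, b, hb, hne, hab⟩
    have hcard2L : Fintype.card (Fin L → ZMod 2) = 2 ^ L := by
      rw [Fintype.card_fun]; simp
    have hle1 : (F.image Φ).card ≤ Fintype.card (Fin L → ZMod 2) := Finset.card_le_univ _
    have hge1 : Fintype.card (Fin L → ZMod 2) ≤ (F.image Φ).card := by
      rw [Finset.card_image_of_injOn hinj, hFcard, hcard2L]; exact h
    have himg : F.image Φ = Finset.univ :=
      Finset.eq_univ_of_card _ (le_antisymm hle1 hge1)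
    have h0mem : (0 : Fin L → ZMod 2) ∈ F.image Φ := himg ▸ Finset.mem_univ _
    obtain ⟨D0, hD0F, hD0⟩ := Finset.mem_image.mp h0mem
    obtain ⟨hsub0, hcard0⟩ := Finset.mem_powersetCard.mp hD0F
    have h00 : ∀ i, i < L → ∑ e ∈ D0, s (i + e) = 0 := by
      intro i hi
      have hfe := congrFun hD0 ⟨i, hi⟩
      simpa [hPhi] using hfe
    have hb0 : ∀ e ∈ D0, e < N / 2 := fun e he => Finset.mem_range.mp (hsub0 he)
    have hz0 : ∀ n, n + N / 2 ≤ N → ∑ e ∈ D0, s (n + e) = 0 :=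
      key_zero s N L (N / 2) c hc D0 hb0 h00
    set D2 := D0.image (· + 1) with hD2def
    have hinj1 : Function.Injective (· + 1 : ℕ → ℕ) := add_left_injective 1
    have hcard2' : D2.card = t := by
      rw [hD2def, Finset.card_image_of_injective _ hinj1, hcard0]
    have hz2 : ∀ n, n + 1 + N / 2 ≤ N → ∑ e ∈ D2, s (n + e) = 0 := by
      intro n hn
      rw [hD2def, Finset.sum_image (fun a _ b _ hab => hinj1 hab)]
      have hzz := hz0 (n + 1) (by omega)
      rw [← hzz]
      exact Finset.sum_congr rfl fun e _ => by rw [show n + (e + 1) = n + 1 + e by ring]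
    have hne02 : D0 ≠ D2 := by
      intro hcontra
      have hsum0 : ∑ e ∈ D2, e = (∑ e ∈ D0, e) + t := by
        rw [hD2def, Finset.sum_image (fun a _ b _ hab => hinj1 hab), Finset.sum_add_distrib]
        simp [hcard0]
      rw [← hcontra] at hsum0
      omega
    refine main D0 D2 hcard0 hcard2'
      (fun e he => by have := hb0 e he; omega)
      (fun e he => ?_) hne02 ?_
    · rw [hD2def] at he
      obtain ⟨e', he', rfl⟩ := Finset.mem_image.mp he
      have := hb0 e' he'; omega
    · intro n hn
      rw [sum_symmDiff_zmod2, hz0 n (by omega), hz2 n hn, add_zero]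
end

section
/- Let S be a binary sequence and N a positive integer. If the N-th maximum-order complexity satisfies M(S,N) ≤ log N − 2 (log in base 2), then S has a half peak in the aperiodic correlation measure of order 2, i.e. C_2(S,N) ≥ N/2. -/
open Finset

/-- If two positions have equal `M`-states, the recurrence propagates the equality forward. -/
lemma maxRec_propagate (s : ℕ → ZMod 2) (N M : ℕ) (f : (Fin M → ZMod 2) → ZMod 2)
    (hf : ∀ i, i + M < N → s (i + M) = f (fun j => s (i + j)))
    (i j : ℕ) (hij : i ≤ j)
    (hstate : ∀ t : Fin M, s (i + t) = s (j + t)) :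
    ∀ u, j + u < N → s (i + u) = s (j + u) := by
  intro u
  induction u using Nat.strong_induction_on with
  | _ u ih =>
    intro hu
    rcases lt_or_ge u M with hlt | hge
    · exact hstate ⟨u, hlt⟩
    · have huv : u = (u - M) + M := by omega
      set v := u - M with hv
      have h1 : s (i + u) = f (fun t => s (i + v + t)) := by
        rw [huv, ← add_assoc]; exact hf (i + v) (by omega)
      have h2 : s (j + u) = f (fun t => s (j + v + t)) := by
        rw [huv, ← add_assoc]; exact hf (j + v) (by omega)
      rw [h1, h2]
      congr 1
      funext t
      have ht := t.isLt
      have := ih (v + t) (by omega) (by omega)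
      rw [add_assoc, add_assoc]
      exact this

/-- **Maximum-order complexity and order-2 correlation.** If `M(S,N) ≤ log N - 2` (base-2
logarithm), then `S` has a half peak in the aperiodic correlation measure of order 2. -/
theorem maxOrderComplexity_half_peak (s : ℕ → ZMod 2) (N : ℕ) (hN : 0 < N)
    (h : (maxOrderComplexity s N : ℝ) ≤ Real.logb 2 N - 2) :
    (N : ℝ) / 2 ≤ (corr s N 2 : ℝ) := by
  set M := maxOrderComplexity s N with hMdef
  -- the defining set is nonempty, so `M` belongs to it
  have hne : {K | 0 < K ∧ IsMaxRecOn s N K}.Nonempty := by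
    refine ⟨N + 1, Nat.succ_pos N, ⟨fun _ => 0, fun i hi => ?_⟩⟩
    omega
  have hMmem : 0 < M ∧ IsMaxRecOn s N M := Nat.sInf_mem hne
  obtain ⟨hMpos, f, hf⟩ := hMmem
  -- `2^(M+2) ≤ N`
  have hpow : 2 ^ (M + 2) ≤ N := by
    have hlog : (M : ℝ) + 2 ≤ Real.logb 2 N := by linarith
    have h1 : (2 : ℝ) ^ ((M : ℝ) + 2) ≤ (2 : ℝ) ^ (Real.logb 2 N) :=
      Real.rpow_le_rpow_of_exponent_le one_le_two hlog
    have h2 : (2 : ℝ) ^ (Real.logb 2 N) = N :=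
      Real.rpow_logb (by norm_num) (by norm_num) (by exact_mod_cast hN)
    have h3 : ((2 ^ (M + 2) : ℕ) : ℝ) ≤ N := by
      rw [h2] at h1
      calc ((2 ^ (M + 2) : ℕ) : ℝ) = (2 : ℝ) ^ ((M : ℝ) + 2) := by
            push_cast
            rw [← Real.rpow_natCast (2 : ℝ) (M + 2)]
            push_cast
            ring_nf
        _ ≤ N := h1
    exact_mod_cast h3
  -- pigeonhole: two positions `i < j ≤ 2^M` with the same state
  obtain ⟨a, b, hab, hstateab⟩ :
      ∃ a b : Fin (2 ^ M + 1), a ≠ b ∧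
        (fun t : Fin M => s (a + t)) = (fun t : Fin M => s (b + t)) := by
    apply Fintype.exists_ne_map_eq_of_card_lt
      (f := fun (p : Fin (2 ^ M + 1)) => fun t : Fin M => s (p + t))
    simp [Fintype.card_fun]
  -- order them
  obtain ⟨i, j, hij, hstate⟩ :
      ∃ i j : ℕ, i < j ∧ j ≤ 2 ^ M ∧ ∀ t : Fin M, s (i + t) = s (j + t) := by
    rcases lt_or_gt_of_ne hab with hlt | hgt
    · exact ⟨a, b, hlt, by omega, fun t => congrFun hstateab t⟩
    · exact ⟨b, a, hgt, by omega, fun t => (congrFun hstateab t).symm⟩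
  obtain ⟨hjle, hstate⟩ := hstate
  have hprop := maxRec_propagate s N M f hf i j (le_of_lt hij) hstate
  -- build the correlation witness
  set U := N - j with hU
  have hjN : j ≤ N := le_trans hjle (le_trans (Nat.pow_le_pow_right (by norm_num) (by omega)) hpow)
  have hj2 : 2 * j ≤ N := by
    have : 2 * j ≤ 2 * 2 ^ M := by omega
    have h4 : 2 * 2 ^ M ≤ 2 ^ (M + 2) := by ring_nf; nlinarith [Nat.one_le_two_pow (n := M)]
    omega
  have hd : StrictMono ![i, j] := by
    intro a b hab
    fin_cases a <;> fin_cases b <;>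
      simp_all [Matrix.cons_val_zero, Matrix.cons_val_one]
  have hsum : (∑ n ∈ range U, (-1 : ℤ) ^
      (∑ t : Fin 2, (s (n + (![i, j] : Fin 2 → ℕ) t)).val)) = U := by
    rw [Finset.sum_congr rfl (fun n hn => ?_), Finset.sum_const, card_range, nsmul_eq_mul,
      mul_one]
    have hn' : n < U := mem_range.mp hn
    have heq : s (n + i) = s (n + j) := by
      have := hprop n (by omega)
      rwa [add_comm i n, add_comm j n] at this
    have : (∑ t : Fin 2, (s (n + (![i, j] : Fin 2 → ℕ) t)).val)
        = (s (n + i)).val + (s (n + j)).val := by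
      simp [Fin.sum_univ_two]
    rw [this, heq]
    exact Even.neg_one_pow ⟨(s (n + j)).val, by ring⟩
  have hmem : U ∈ {m : ℕ | ∃ (U : ℕ) (d : Fin 2 → ℕ), U + 2 ≤ N + 1 ∧ StrictMono d ∧
      (∀ t, d t + U ≤ N) ∧
      m = (∑ n ∈ range U, (-1 : ℤ) ^ (∑ t : Fin 2, (s (n + d t)).val)).natAbs} := by
    refine ⟨U, ![i, j], by omega, hd, ?_, ?_⟩
    · intro t
      fin_cases t <;> simp [Matrix.cons_val_zero, Matrix.cons_val_one] <;> omega
    · rw [hsum]; simp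
  have hbdd : BddAbove {m : ℕ | ∃ (U : ℕ) (d : Fin 2 → ℕ), U + 2 ≤ N + 1 ∧ StrictMono d ∧
      (∀ t, d t + U ≤ N) ∧
      m = (∑ n ∈ range U, (-1 : ℤ) ^ (∑ t : Fin 2, (s (n + d t)).val)).natAbs} := by
    refine ⟨N, fun m hm => ?_⟩
    obtain ⟨V, d, hV, _, _, hmval⟩ := hm
    have h5 : m ≤ V := by
      rw [hmval]
      calc (∑ n ∈ range V, (-1 : ℤ) ^ (∑ t : Fin 2, (s (n + d t)).val)).natAbs
          ≤ ∑ n ∈ range V, ((-1 : ℤ) ^ (∑ t : Fin 2, (s (n + d t)).val)).natAbs := by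
            exact nat_abs_sum_le _ _
        _ = V := by simp [Int.natAbs_pow]
    omega
  have hle : U ≤ corr s N 2 := le_csSup hbdd hmem
  -- conclude
  have hfinal : N ≤ 2 * corr s N 2 := by omega
  rw [div_le_iff₀ (by norm_num)]
  calc (N : ℝ) ≤ (2 * corr s N 2 : ℕ) := by exact_mod_cast hfinal
    _ = (corr s N 2 : ℝ) * 2 := by push_cast; ring
end

section
/- For every ε > 0 there exist a constant c > 0 and a threshold T_0 with the following property: for every integer T ≥ T_0, every T-periodic binary sequence S satisfying C_k(S,N) ≤ (14/3)^k · k · √T · log T for all positive integers N ≤ T and all orders k with 1 ≤ k ≤ ε·log T/8, and every positive integer N with 2·T^{1/2+ε}·(log T)^2 < N ≤ T, the N-th linear complexity satisfies L(S,N) ≥ c·(log N)^2. All logarithms are in base 2. -/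
open Finset

/- ### Auxiliary lemmas -/

private lemma sum_symmDiff_char2 (A B : Finset ℕ) (f : ℕ → ZMod 2) :
    ∑ i ∈ symmDiff A B, f i = (∑ i ∈ A, f i) + ∑ i ∈ B, f i := by
  classical
  have hA : ∑ i ∈ A ∩ B, f i + ∑ i ∈ A \ B, f i = ∑ i ∈ A, f i :=
    Finset.sum_inter_add_sum_sdiff A B f
  have hB : ∑ i ∈ B ∩ A, f i + ∑ i ∈ B \ A, f i = ∑ i ∈ B, f i :=
    Finset.sum_inter_add_sum_sdiff B A f
  have hU : ∑ i ∈ symmDiff A B, f i = ∑ i ∈ A \ B, f i + ∑ i ∈ B \ A, f i := by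
    rw [symmDiff_def, Finset.sup_eq_union,
      Finset.sum_union (disjoint_sdiff_sdiff : Disjoint (A \ B) (B \ A))]
  have hz : ∑ i ∈ A ∩ B, f i + ∑ i ∈ A ∩ B, f i = 0 :=
    (by decide : ∀ x : ZMod 2, x + x = 0) _
  rw [Finset.inter_comm B A] at hB
  rw [hU, ← hA, ← hB]
  linear_combination -hz

private lemma neg_one_pow_sum_eq_one {k : ℕ} (f : Fin k → ZMod 2) (h : ∑ j, f j = 0) :
    (-1 : ℤ) ^ (∑ j, (f j).val) = 1 := by
  have h2 : ((∑ j, (f j).val : ℕ) : ZMod 2) = 0 := by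
    push_cast
    simpa [ZMod.natCast_val, ZMod.cast_id] using h
  have h3 : 2 ∣ ∑ j, (f j).val := (ZMod.natCast_eq_zero_iff _ 2).mp h2
  exact Even.neg_one_pow (even_iff_two_dvd.mpr h3)

private lemma le_corr (s : ℕ → ZMod 2) (N k U : ℕ) (d : Fin k → ℕ)
    (hd : StrictMono d) (hUk : U + k ≤ N + 1) (hdU : ∀ j, d j + U ≤ N)
    (hrel : ∀ n < U, ∑ j, s (n + d j) = 0) : U ≤ corr s N k := by
  have hb : BddAbove {m : ℕ | ∃ (U : ℕ) (d : Fin k → ℕ), U + k ≤ N + 1 ∧ StrictMono d ∧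
      (∀ j, d j + U ≤ N) ∧
      m = (∑ n ∈ range U, (-1 : ℤ) ^ (∑ j : Fin k, (s (n + d j)).val)).natAbs} := by
    refine ⟨N + 1, fun m hm => ?_⟩
    obtain ⟨U', d', hU', -, -, rfl⟩ := hm
    have h1 : |∑ n ∈ range U', (-1 : ℤ) ^ (∑ j : Fin k, (s (n + d' j)).val)| ≤ (U' : ℤ) := by
      calc |∑ n ∈ range U', (-1 : ℤ) ^ (∑ j : Fin k, (s (n + d' j)).val)|
          ≤ ∑ n ∈ range U', |(-1 : ℤ) ^ (∑ j : Fin k, (s (n + d' j)).val)| :=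
            Finset.abs_sum_le_sum_abs _ _
        _ ≤ (U' : ℤ) := by simp [abs_pow]
    have h2 : ((∑ n ∈ range U', (-1 : ℤ) ^ (∑ j : Fin k, (s (n + d' j)).val)).natAbs : ℤ)
        ≤ (U' : ℤ) := by
      rw [Int.natCast_natAbs]; exact h1
    exact_mod_cast h2.trans (show (U' : ℤ) ≤ ((N + 1 : ℕ) : ℤ) by
      exact_mod_cast (by omega : U' ≤ N + 1))
  apply le_csSup hb
  refine ⟨U, d, hUk, hd, hdU, ?_⟩
  have key : ∑ n ∈ range U, (-1 : ℤ) ^ (∑ j : Fin k, (s (n + d j)).val) = (U : ℤ) := by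
    rw [Finset.sum_congr rfl fun n hn =>
      neg_one_pow_sum_eq_one (fun j => s (n + d j)) (hrel n (Finset.mem_range.mp hn))]
    simp
  rw [key]
  simp

private lemma prop_rec (s : ℕ → ZMod 2) (N L : ℕ) (c : Fin L → ZMod 2)
    (hrec : ∀ i, i + L < N → s (i + L) = ∑ j : Fin L, c j * s (i + j))
    (E : Finset ℕ) (D : ℕ) (hE : ∀ i ∈ E, i ≤ D)
    (hbase : ∀ m < L, ∑ i ∈ E, s (i + m) = 0) :
    ∀ n, n + D + L ≤ N → ∀ m, m < L → ∑ i ∈ E, s (n + i + m) = 0 := by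
  intro n
  induction n with
  | zero => intro _ m hm; simpa using hbase m hm
  | succ n ih =>
    intro hn m hm
    rcases Nat.lt_or_ge (m + 1) L with hm1 | hm1
    · rw [Finset.sum_congr rfl fun i _ => by rw [show n + 1 + i + m = n + i + (m + 1) by omega]]
      exact ih (by omega) (m + 1) hm1
    · have hterm : ∀ i ∈ E, s (n + 1 + i + m) = ∑ j : Fin L, c j * s (n + i + (j : ℕ)) := by
        intro i hi
        have h1 : n + 1 + i + m = (n + i) + L := by omega
        rw [h1]
        exact hrec (n + i) (by have := hE i hi; omega)
      rw [Finset.sum_congr rfl hterm, Finset.sum_comm]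
      refine Finset.sum_eq_zero fun j _ => ?_
      rw [← Finset.mul_sum, ih (by omega) (j : ℕ) j.isLt, mul_zero]


private lemma exists_good_corr (s : ℕ → ZMod 2) (N L t B : ℕ)
    (hL1 : 0 < L) (ht0 : 0 < t) (hB2 : 2 ≤ B)
    (hlin : IsLinRecOn s N L)
    (hcard : Fintype.card (Fin L → ZMod 2) < Fintype.card (Fin t → Fin B))
    (hPLN : t * B + L < N) :
    ∃ k, 1 ≤ k ∧ k ≤ 2 * t ∧ N - (t * B - 1 + L) ≤ corr s N k := by
  classical
  obtain ⟨cf, hrec⟩ := hlin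
  have hB0 : 0 < B := by omega
  obtain ⟨a, a', hne, hfeq⟩ := Fintype.exists_ne_map_eq_of_card_lt
    (fun (b : Fin t → Fin B) (m : Fin L) =>
      ∑ j : Fin t, s ((b j : ℕ) + (j : ℕ) * B + (m : ℕ))) hcard
  have hfeq' : ∀ m, m < L →
      (∑ j : Fin t, s ((a j : ℕ) + (j : ℕ) * B + m))
        = ∑ j : Fin t, s ((a' j : ℕ) + (j : ℕ) * B + m) :=
    fun m hm => congrFun hfeq ⟨m, hm⟩
  have hdiv : ∀ (b : Fin t → Fin B) (j : Fin t), ((b j : ℕ) + (j : ℕ) * B) / B = (j : ℕ) :=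
    fun b j => by
      rw [Nat.add_mul_div_right _ _ hB0, Nat.div_eq_of_lt (b j).isLt, zero_add]
  have hinj : ∀ (b : Fin t → Fin B), ∀ x ∈ (univ : Finset (Fin t)),
      ∀ y ∈ (univ : Finset (Fin t)),
      (fun j : Fin t => (b j : ℕ) + (j : ℕ) * B) x
        = (fun j : Fin t => (b j : ℕ) + (j : ℕ) * B) y → x = y := by
    intro b j1 _ j2 _ h
    have h1 : ((b j1 : ℕ) + (j1 : ℕ) * B) / B = ((b j2 : ℕ) + (j2 : ℕ) * B) / B :=
      congrArg (· / B) h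
    rw [hdiv b j1, hdiv b j2] at h1
    exact Fin.ext h1
  set A1 := Finset.image (fun j : Fin t => (a j : ℕ) + (j : ℕ) * B) Finset.univ with hA1
  set A2 := Finset.image (fun j : Fin t => (a' j : ℕ) + (j : ℕ) * B) Finset.univ with hA2
  set E := symmDiff A1 A2 with hE
  have hbase : ∀ m, m < L → ∑ i ∈ E, s (i + m) = 0 := by
    intro m hm
    rw [hE, sum_symmDiff_char2, hA1, Finset.sum_image (hinj a), hA2,
      Finset.sum_image (hinj a'), hfeq' m hm]
    exact (by decide : ∀ x : ZMod 2, x + x = 0) _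
  obtain ⟨j0, hj0⟩ := Function.ne_iff.mp hne
  have hmemE : (a j0 : ℕ) + (j0 : ℕ) * B ∈ E := by
    rw [hE, Finset.mem_symmDiff]
    left
    refine ⟨by rw [hA1]; exact Finset.mem_image_of_mem _ (Finset.mem_univ _), ?_⟩
    rw [hA2]
    intro hc
    obtain ⟨j, -, hj⟩ := Finset.mem_image.mp hc
    have h1 : ((a' j : ℕ) + (j : ℕ) * B) / B = ((a j0 : ℕ) + (j0 : ℕ) * B) / B :=
      congrArg (· / B) hj
    rw [hdiv a' j, hdiv a j0] at h1
    have hjj : j = j0 := Fin.ext h1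
    subst hjj
    have h2 : (a' j : ℕ) = (a j : ℕ) := by omega
    exact hj0 (Fin.ext h2).symm
  have hEne : E.Nonempty := ⟨_, hmemE⟩
  have hk1 : 1 ≤ E.card := Finset.card_pos.mpr hEne
  have hsub : E ⊆ A1 ∪ A2 := by
    rw [hE]
    intro x hx
    rcases Finset.mem_symmDiff.mp hx with ⟨h1, -⟩ | ⟨h1, -⟩
    · exact Finset.mem_union_left _ h1
    · exact Finset.mem_union_right _ h1
  have hkle : E.card ≤ 2 * t := by
    have h1 : A1.card ≤ t := by
      rw [hA1]; exact le_trans (Finset.card_image_le) (by simp)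
    have h2 : A2.card ≤ t := by
      rw [hA2]; exact le_trans (Finset.card_image_le) (by simp)
    calc E.card ≤ (A1 ∪ A2).card := Finset.card_le_card hsub
      _ ≤ A1.card + A2.card := Finset.card_union_le _ _
      _ ≤ 2 * t := by omega
  have hEel : ∀ i ∈ E, i ≤ t * B - 1 := by
    intro i hi
    have hkey : ∀ (b : Fin t → Fin B) (j : Fin t), (b j : ℕ) + (j : ℕ) * B ≤ t * B - 1 := by
      intro b j
      have h1 : (j : ℕ) ≤ t - 1 := by have := j.isLt; omega
      have h2 : (j : ℕ) * B ≤ (t - 1) * B := Nat.mul_le_mul_right _ h1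
      have h3 : (t - 1) * B + B = t * B := by
        have h4 : (t - 1) + 1 = t := by omega
        calc (t - 1) * B + B = ((t - 1) + 1) * B := by ring
          _ = t * B := by rw [h4]
      have h5 : (b j : ℕ) < B := (b j).isLt
      omega
    rcases Finset.mem_union.mp (hsub hi) with h1 | h1
    · rw [hA1] at h1
      obtain ⟨j, -, rfl⟩ := Finset.mem_image.mp h1
      exact hkey a j
    · rw [hA2] at h1
      obtain ⟨j, -, rfl⟩ := Finset.mem_image.mp h1
      exact hkey a' j
  have htB1 : 1 ≤ t * B := by
    calc 1 = 1 * 1 := rfl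
      _ ≤ t * B := Nat.mul_le_mul ht0 hB0
  refine ⟨E.card, hk1, hkle, ?_⟩
  have hrel : ∀ n, n < N - (t * B - 1 + L) →
      ∑ j : Fin E.card, s (n + (E.orderIsoOfFin rfl j : ℕ)) = 0 := by
    intro n hn
    have heq : ∑ j : Fin E.card, s (n + (E.orderIsoOfFin rfl j : ℕ))
        = ∑ i ∈ E, s (n + i) := by
      rw [← Finset.sum_coe_sort E (fun i => s (n + i))]
      exact Fintype.sum_equiv (E.orderIsoOfFin rfl).toEquiv _ _ (fun j => rfl)
    rw [heq]
    have h := prop_rec s N L cf hrec E (t * B - 1) hEel hbase n (by omega) 0 hL1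
    simpa using h
  refine le_corr s N E.card (N - (t * B - 1 + L)) (fun j => (E.orderIsoOfFin rfl j : ℕ))
    (fun i j hij => (E.orderIsoOfFin rfl).strictMono hij)
    ?_ ?_ hrel
  · have h2t : 2 * t ≤ t * B := by
      calc 2 * t = t * 2 := by ring
        _ ≤ t * B := Nat.mul_le_mul_left _ hB2
    omega
  · intro j
    have h6 := hEel _ (E.orderIsoOfFin rfl j).2
    show (E.orderIsoOfFin rfl j : ℕ) + (N - (t * B - 1 + L)) ≤ N
    omega

set_option maxHeartbeats 1600000 in
/-- **Hall-type corollary, genericized.** For every `ε > 0` there are `c > 0` and `T₀` such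
that every `T`-periodic binary sequence (`T ≥ T₀`) whose correlation measures satisfy
`C_k(S,N) ≤ (14/3)^k k √T log T` for all `N ≤ T` and all `1 ≤ k ≤ ε log T / 8` has
`L(S,N) ≥ c (log N)²` for every `N` with `2 T^{1/2+ε} (log T)² < N ≤ T` (base-2 logs). -/
theorem hall_linComplexity (ε : ℝ) (hε : 0 < ε) :
    ∃ c : ℝ, 0 < c ∧ ∃ T₀ : ℕ, ∀ T : ℕ, T₀ ≤ T → ∀ s : ℕ → ZMod 2,
      (∀ i, s (i + T) = s i) →
      (∀ N : ℕ, 0 < N → N ≤ T → ∀ k : ℕ, 1 ≤ k → (k : ℝ) ≤ ε * Real.logb 2 T / 8 →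
        (corr s N k : ℝ) ≤ (14 / 3 : ℝ) ^ k * k * Real.sqrt T * Real.logb 2 T) →
      ∀ N : ℕ, 2 * (T : ℝ) ^ ((1 : ℝ) / 2 + ε) * (Real.logb 2 T) ^ 2 < (N : ℝ) → N ≤ T →
        c * (Real.logb 2 N) ^ 2 ≤ (linComplexity s N : ℝ) := by
  rcases le_or_gt (1/2 : ℝ) ε with hbig | hsm
  · -- `ε ≥ 1/2`: the range of admissible `N` is empty.
    refine ⟨1, one_pos, 4, fun T hT s _ _ N hN1 hN2 => absurd hN1 (not_lt.mpr ?_)⟩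
    have hT4 : (4 : ℝ) ≤ (T : ℝ) := by exact_mod_cast hT
    have hT0 : (0 : ℝ) < (T : ℝ) := by linarith
    have h24 : (2 : ℝ) ^ ((2 : ℕ) : ℝ) = 4 := by rw [Real.rpow_natCast]; norm_num
    have hlog4 : Real.logb 2 4 = 2 := by
      rw [← h24, Real.logb_rpow (by norm_num) (by norm_num)]; norm_num
    have hR2 : (2 : ℝ) ≤ Real.logb 2 T := by
      have h := (Real.logb_le_logb one_lt_two (by norm_num) hT0).mpr hT4
      rwa [hlog4] at h
    have hTX : (T : ℝ) ≤ (T : ℝ) ^ ((1 : ℝ) / 2 + ε) := by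
      calc (T : ℝ) = (T : ℝ) ^ (1 : ℝ) := (Real.rpow_one _).symm
        _ ≤ _ := Real.rpow_le_rpow_of_exponent_le (by linarith) (by linarith)
    have hNT : (N : ℝ) ≤ (T : ℝ) := by exact_mod_cast hN2
    have hX0 : (0 : ℝ) < (T : ℝ) ^ ((1 : ℝ) / 2 + ε) := lt_of_lt_of_le hT0 hTX
    have hR4 : (4 : ℝ) ≤ (Real.logb 2 T) ^ 2 := by nlinarith
    have hkey : (T : ℝ) * 4 ≤ (T : ℝ) ^ ((1 : ℝ) / 2 + ε) * (Real.logb 2 T) ^ 2 :=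
      mul_le_mul hTX hR4 (by norm_num) hX0.le
    linarith
  · -- Main case: `ε < 1/2`.
    refine ⟨ε / 256, by positivity, max 16 ⌈(2 : ℝ) ^ ((32 : ℝ) / ε)⌉₊,
      fun T hT s _ hcorr N hN1 hN2 => ?_⟩
    have hT16n : 16 ≤ T := le_trans (le_max_left _ _) hT
    have hT16 : (16 : ℝ) ≤ (T : ℝ) := by exact_mod_cast hT16n
    have hT1 : (1 : ℝ) ≤ (T : ℝ) := by linarith
    have hT0 : (0 : ℝ) < (T : ℝ) := by linarith
    have hceil : (2 : ℝ) ^ ((32 : ℝ) / ε) ≤ (T : ℝ) :=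
      le_trans (Nat.le_ceil _) (by exact_mod_cast le_trans (le_max_right _ _) hT)
    set R := Real.logb 2 (T : ℝ) with hRdef
    have hR32 : 32 / ε ≤ R := by
      have h := (Real.logb_le_logb (b := 2) one_lt_two
        (x := (2 : ℝ) ^ ((32 : ℝ) / ε)) (by positivity) hT0).mpr hceil
      rwa [Real.logb_rpow (by norm_num) (by norm_num)] at h
    have hεR : 32 ≤ ε * R := by
      have h := (div_le_iff₀ hε).mp hR32
      nlinarith
    have hR64 : 64 ≤ R := by
      have h6 : (64 : ℝ) ≤ 32 / ε := by rw [le_div_iff₀ hε]; nlinarith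
      linarith
    have hR0 : (0 : ℝ) < R := by linarith
    have hrpow1 : ∀ e : ℝ, 0 ≤ e → (1 : ℝ) ≤ (T : ℝ) ^ e := fun e he => by
      calc (1 : ℝ) = (T : ℝ) ^ (0 : ℝ) := (Real.rpow_zero _).symm
        _ ≤ _ := Real.rpow_le_rpow_of_exponent_le hT1 he
    set X := (T : ℝ) ^ ((1 : ℝ) / 2 + ε) with hXdef
    have hX1 : (1 : ℝ) ≤ X := hrpow1 _ (by linarith)
    have hXpos : (0 : ℝ) < X := lt_of_lt_of_le one_pos hX1
    have hXR2 : (0 : ℝ) < 2 * X * R ^ 2 := mul_pos (mul_pos two_pos hXpos) (pow_pos hR0 2)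
    have hN0R : (0 : ℝ) < (N : ℝ) := lt_trans hXR2 hN1
    have hN0 : 0 < N := by exact_mod_cast hN0R
    have hsq : Real.sqrt (T : ℝ) = (T : ℝ) ^ ((1 : ℝ) / 2) := Real.sqrt_eq_rpow _
    by_cases hz : ∀ i < N, s i = 0
    · exfalso
      have hcor1 : N ≤ corr s N 1 :=
        le_corr s N 1 N (fun _ => 0)
          (fun i j hij => absurd (Subsingleton.elim i j) (ne_of_lt hij))
          (by omega) (fun _ => by simp)
          (fun n hn => by simpa using hz n hn)
      have h1 : ((1 : ℕ) : ℝ) ≤ ε * R / 8 := by push_cast; linarith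
      have hb := hcorr N hN0 hN2 1 le_rfl h1
      have hcorR : (N : ℝ) ≤ (14 / 3 : ℝ) ^ (1 : ℕ) * ((1 : ℕ) : ℝ) * Real.sqrt (T : ℝ) * R :=
        le_trans (by exact_mod_cast hcor1) hb
      rw [hsq] at hcorR
      norm_num at hcorR
      have hsqX : (T : ℝ) ^ ((1 : ℝ) / 2) ≤ X :=
        Real.rpow_le_rpow_of_exponent_le hT1 (by linarith)
      have hsq0 : (0 : ℝ) < (T : ℝ) ^ ((1 : ℝ) / 2) := by positivity
      have hA : (0 : ℝ) ≤ ((T : ℝ) ^ ((1 : ℝ) / 2)) * R * (2 * R - 14 / 3) :=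
        mul_nonneg (mul_nonneg hsq0.le hR0.le) (by linarith)
      have hB : ((T : ℝ) ^ ((1 : ℝ) / 2)) * R ^ 2 ≤ X * R ^ 2 :=
        mul_le_mul_of_nonneg_right hsqX (sq_nonneg R)
      nlinarith [hA, hB]
    · -- Nonzero case.
      have hlc : linComplexity s N = sInf {L | 0 < L ∧ IsLinRecOn s N L} := if_neg hz
      by_contra hcon
      push_neg at hcon
      rw [hlc] at hcon
      set L := sInf {L | 0 < L ∧ IsLinRecOn s N L} with hLdef
      have hmemL : L ∈ {L | 0 < L ∧ IsLinRecOn s N L} :=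
        Nat.sInf_mem ⟨N, hN0, ⟨fun _ => 0, fun i hi => absurd hi (by omega)⟩⟩
      obtain ⟨hL1, cf, hrec⟩ := hmemL
      have hlogN : Real.logb 2 (N : ℝ) ≤ R :=
        (Real.logb_le_logb one_lt_two hN0R hT0).mpr (by exact_mod_cast hN2)
      have hlogN0 : 0 ≤ Real.logb 2 (N : ℝ) :=
        Real.logb_nonneg one_lt_two (by exact_mod_cast hN0)
      have hLR : (L : ℝ) < ε / 256 * R ^ 2 := by
        have hp : (Real.logb 2 (N : ℝ)) ^ 2 ≤ R ^ 2 := pow_le_pow_left₀ hlogN0 hlogN 2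
        have hm := mul_le_mul_of_nonneg_left hp (by positivity : (0 : ℝ) ≤ ε / 256)
        linarith
      -- the parameter `t`
      set t := ⌊ε * R / 16⌋₊ with htdef
      have hx2 : (2 : ℝ) ≤ ε * R / 16 := by linarith
      have ht_le : (t : ℝ) ≤ ε * R / 16 := Nat.floor_le (by linarith)
      have ht_ge : ε * R / 32 ≤ (t : ℝ) := by
        have h := Nat.sub_one_lt_floor (ε * R / 16)
        linarith
      have ht1 : 1 ≤ t := Nat.le_floor (by push_cast; linarith)
      have ht0 : 0 < t := ht1
      have ht1R : (1 : ℝ) ≤ (t : ℝ) := by exact_mod_cast ht1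
      have ht0R : (0 : ℝ) < (t : ℝ) := by linarith
      -- the parameter `B`
      set B := 2 ^ (L / t + 1) with hBdef
      have hB2 : 2 ≤ B := by
        calc 2 = 2 ^ 1 := rfl
          _ ≤ B := by
              rw [hBdef]
              exact Nat.pow_le_pow_right (by norm_num) (Nat.le_add_left 1 (L / t))
      have hB0 : 0 < B := by omega
      have hLt : (L : ℝ) / (t : ℝ) ≤ R / 8 := by
        rw [div_le_div_iff₀ ht0R (by norm_num)]
        linarith [mul_le_mul_of_nonneg_left ht_ge hR0.le]
      have hBle : (B : ℝ) ≤ 2 * (T : ℝ) ^ ((1 : ℝ) / 8) := by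
        have h1 : ((L / t : ℕ) : ℝ) ≤ (L : ℝ) / (t : ℝ) := Nat.cast_div_le
        calc (B : ℝ) = (2 : ℝ) ^ (L / t + 1 : ℕ) := by rw [hBdef]; push_cast; ring
          _ = 2 * (2 : ℝ) ^ (L / t : ℕ) := by rw [pow_succ]; ring
          _ = 2 * (2 : ℝ) ^ (((L / t : ℕ)) : ℝ) := by rw [Real.rpow_natCast]
          _ ≤ 2 * (2 : ℝ) ^ (R / 8) := by
              have h2 := Real.rpow_le_rpow_of_exponent_le (by norm_num : (1 : ℝ) ≤ 2)
                (le_trans h1 hLt)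
              linarith
          _ = 2 * (T : ℝ) ^ ((1 : ℝ) / 8) := by
              rw [show R / 8 = R * ((1 : ℝ) / 8) by ring,
                Real.rpow_mul (by norm_num : (0 : ℝ) ≤ 2), hRdef,
                Real.rpow_logb (by norm_num) (by norm_num) hT0]
      -- pigeonhole collision
      have hcard : Fintype.card (Fin L → ZMod 2) < Fintype.card (Fin t → Fin B) := by
        have h1 : t * (L / t) + L % t = L := Nat.div_add_mod L t
        have h2 : L % t < t := Nat.mod_lt _ ht0
        have h3 : L < (L / t + 1) * t := by
          have h4 : (L / t + 1) * t = t * (L / t) + t := by ring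
          omega
        calc Fintype.card (Fin L → ZMod 2) = 2 ^ L := by rw [Fintype.card_fun, ZMod.card, Fintype.card_fin]
          _ < 2 ^ ((L / t + 1) * t) := Nat.pow_lt_pow_right (by norm_num) h3
          _ = (2 ^ (L / t + 1)) ^ t := by rw [pow_mul]
          _ = Fintype.card (Fin t → Fin B) := by simp [Fintype.card_fun, hBdef]
      -- numeric bounds
      have hPR : ((t * B : ℕ) : ℝ) ≤ (1 / 4) * X * R ^ 2 := by
        have h1 : ((t * B : ℕ) : ℝ) = (t : ℝ) * (B : ℝ) := by push_cast; ring
        have h8 : (T : ℝ) ^ ((1 : ℝ) / 8) ≤ X :=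
          Real.rpow_le_rpow_of_exponent_le hT1 (by linarith)
        have h80 : (0 : ℝ) < (T : ℝ) ^ ((1 : ℝ) / 8) := by positivity
        have h2 : (t : ℝ) * (B : ℝ) ≤ (ε * R / 16) * (2 * (T : ℝ) ^ ((1 : ℝ) / 8)) :=
          mul_le_mul ht_le hBle (by positivity) (by linarith)
        have s1 : ε * (R * ((T : ℝ) ^ ((1 : ℝ) / 8))) ≤ (1 / 2) * (R * ((T : ℝ) ^ ((1 : ℝ) / 8))) :=
          mul_le_mul_of_nonneg_right hsm.le (mul_nonneg hR0.le h80.le)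
        have s2 : R * ((T : ℝ) ^ ((1 : ℝ) / 8)) ≤ R * X := mul_le_mul_of_nonneg_left h8 hR0.le
        have hRR : R ≤ 4 * R ^ 2 := by
          have h5 := mul_le_mul_of_nonneg_left hR64 hR0.le
          nlinarith [h5]
        have s3 : R * X ≤ (4 * R ^ 2) * X := mul_le_mul_of_nonneg_right hRR hXpos.le
        rw [h1]
        linarith [h2, s1, s2, s3]
      have hLX : (L : ℝ) ≤ (1 / 4) * X * R ^ 2 := by
        have hq1 : (0 : ℝ) ≤ (X - 1) * R ^ 2 := mul_nonneg (sub_nonneg.mpr hX1) (sq_nonneg R)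
        have hq2 : (0 : ℝ) ≤ (1 / 2 - ε) * R ^ 2 := mul_nonneg (by linarith) (sq_nonneg R)
        nlinarith [hq1, hq2, hLR]
      have hPLN : t * B + L < N := by
        have h1 : ((t * B + L : ℕ) : ℝ) < (N : ℝ) := by
          push_cast
          push_cast at hPR
          linarith [hPR, hLX, hN1, hXR2]
        exact_mod_cast h1
      obtain ⟨k, hk1, hkle, hcorrk⟩ :=
        exists_good_corr s N L t B hL1 ht0 hB2 ⟨cf, hrec⟩ hcard hPLN
      -- correlation upper bound from the hypothesis
      have hk2 : (k : ℝ) ≤ ε * R / 8 := by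
        have h1 : (k : ℝ) ≤ 2 * (t : ℝ) := by exact_mod_cast hkle
        linarith
      have hup := hcorr N hN0 hN2 k hk1 hk2
      have h143 : ((14 : ℝ) / 3) ^ k ≤ (T : ℝ) ^ (3 * ε / 8) := by
        calc ((14 : ℝ) / 3) ^ k ≤ (8 : ℝ) ^ k := pow_le_pow_left₀ (by norm_num) (by norm_num) k
          _ = (2 : ℝ) ^ (3 * k) := by rw [show (8 : ℝ) = 2 ^ 3 by norm_num, ← pow_mul]
          _ = (2 : ℝ) ^ ((3 * k : ℕ) : ℝ) := (Real.rpow_natCast _ _).symm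
          _ ≤ (2 : ℝ) ^ (R * (3 * ε / 8)) := by
              apply Real.rpow_le_rpow_of_exponent_le (by norm_num)
              push_cast
              linarith
          _ = (T : ℝ) ^ (3 * ε / 8) := by
              rw [Real.rpow_mul (by norm_num : (0 : ℝ) ≤ 2), hRdef,
                Real.rpow_logb (by norm_num) (by norm_num) hT0]
      have hkR : (k : ℝ) ≤ R / 16 := by
        have h5 := mul_le_mul_of_nonneg_right hsm.le hR0.le
        linarith
      have hTm : (T : ℝ) ^ ((1 : ℝ) / 2) * (T : ℝ) ^ (3 * ε / 8)
          = (T : ℝ) ^ ((1 : ℝ) / 2 + 3 * ε / 8) := (Real.rpow_add hT0 _ _).symm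
      have hTX : (T : ℝ) ^ ((1 : ℝ) / 2 + 3 * ε / 8) ≤ X :=
        Real.rpow_le_rpow_of_exponent_le hT1 (by linarith)
      have hfinal_up : (14 / 3 : ℝ) ^ k * (k : ℝ) * Real.sqrt (T : ℝ) * R
          ≤ (1 / 16) * X * R ^ 2 := by
        rw [hsq]
        have hsq0 : (0 : ℝ) < (T : ℝ) ^ ((1 : ℝ) / 2) := by positivity
        have hY0 : (0 : ℝ) < (T : ℝ) ^ (3 * ε / 8) := by positivity
        have m1 : (14 / 3 : ℝ) ^ k * (k : ℝ) ≤ (T : ℝ) ^ (3 * ε / 8) * (R / 16) :=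
          mul_le_mul h143 hkR (Nat.cast_nonneg k) hY0.le
        have hstep : (14 / 3 : ℝ) ^ k * (k : ℝ) * (T : ℝ) ^ ((1 : ℝ) / 2) * R
            ≤ (T : ℝ) ^ (3 * ε / 8) * (R / 16) * (T : ℝ) ^ ((1 : ℝ) / 2) * R :=
          mul_le_mul_of_nonneg_right (mul_le_mul_of_nonneg_right m1 hsq0.le) hR0.le
        have h6 := mul_le_mul_of_nonneg_right hTX (sq_nonneg R)
        calc (14 / 3 : ℝ) ^ k * (k : ℝ) * (T : ℝ) ^ ((1 : ℝ) / 2) * R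
            ≤ (T : ℝ) ^ (3 * ε / 8) * (R / 16) * (T : ℝ) ^ ((1 : ℝ) / 2) * R := hstep
          _ = (1 / 16) * ((T : ℝ) ^ ((1 : ℝ) / 2) * (T : ℝ) ^ (3 * ε / 8)) * R ^ 2 := by ring
          _ = (1 / 16) * (T : ℝ) ^ ((1 : ℝ) / 2 + 3 * ε / 8) * R ^ 2 := by rw [hTm]
          _ ≤ (1 / 16) * X * R ^ 2 := by linarith [h6]
      -- lower bound on `U` and final contradiction
      have hUcast : ((N - (t * B - 1 + L) : ℕ) : ℝ)
          = (N : ℝ) - ((t * B - 1 + L : ℕ) : ℝ) := by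
        rw [Nat.cast_sub (by omega)]
      have hD1 : ((t * B - 1 + L : ℕ) : ℝ) ≤ ((t * B : ℕ) : ℝ) + (L : ℝ) := by
        have h7 : (t * B - 1 + L : ℕ) ≤ t * B + L := by omega
        calc ((t * B - 1 + L : ℕ) : ℝ) ≤ ((t * B + L : ℕ) : ℝ) := by exact_mod_cast h7
          _ = ((t * B : ℕ) : ℝ) + (L : ℝ) := by push_cast; ring
      have hUreal : (N : ℝ) - ((t * B : ℕ) : ℝ) - (L : ℝ) ≤ ((N - (t * B - 1 + L) : ℕ) : ℝ) := by
        rw [hUcast]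
        linarith
      have hUc : ((N - (t * B - 1 + L) : ℕ) : ℝ) ≤ (corr s N k : ℝ) := by exact_mod_cast hcorrk
      linarith [hN1, hPR, hLX, hUreal, hUc, hup, hfinal_up, hXR2]
end

section
/- For every ε > 0 and every c > 0 there exists p_0 with the following property: for every prime p ≥ p_0, every p²-periodic binary sequence S satisfying C_2(S,N) ≤ c·p·(log p)^3 for all positive integers N ≤ p², and every positive integer N with 2c·p^{1+ε}·(log p)^3 < N ≤ p², one has C_2(S,N) < N/2, and consequently the N-th linear complexity satisfies 2^{L(S,N)} > ⌊N/2⌋, so that L(S,N) > log_2(⌊N/2⌋). All logarithms are in base 2. -/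
open Finset

lemma corrSet_bdd (s : ℕ → ZMod 2) (N k : ℕ) :
    BddAbove {m : ℕ | ∃ (U : ℕ) (d : Fin k → ℕ), U + k ≤ N + 1 ∧ StrictMono d ∧
      (∀ j, d j + U ≤ N) ∧
      m = (∑ n ∈ range U, (-1 : ℤ) ^ (∑ j : Fin k, (s (n + d j)).val)).natAbs} := by
  refine ⟨N + 1, fun m hm => ?_⟩
  obtain ⟨U, d, hU, _, _, hme⟩ := hm
  have habs : |∑ n ∈ range U, (-1 : ℤ) ^ (∑ j : Fin k, (s (n + d j)).val)| ≤ (U : ℤ) := by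
    calc |∑ n ∈ range U, (-1 : ℤ) ^ (∑ j : Fin k, (s (n + d j)).val)|
        ≤ ∑ n ∈ range U, |(-1 : ℤ) ^ (∑ j : Fin k, (s (n + d j)).val)| :=
          Finset.abs_sum_le_sum_abs _ _
      _ ≤ ∑ n ∈ range U, 1 := by
          apply Finset.sum_le_sum; intro n _
          rw [abs_pow, abs_neg, abs_one, one_pow]
      _ = (U : ℤ) := by simp
  have hm2 : (m : ℤ) ≤ (U : ℤ) := by
    rw [hme, Int.natCast_natAbs]; exact habs
  have : m ≤ U := by exact_mod_cast hm2
  omega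

lemma key_lemma (s : ℕ → ZMod 2) (N : ℕ) (hN : 2 ≤ N)
    (h : (corr s N 2 : ℝ) < (N : ℝ) / 2) : N / 2 < 2 ^ linComplexity s N := by
  by_contra hcon
  push_neg at hcon
  set L := linComplexity s N with hLdef
  -- a linear recurrence of order L holds on the first N terms
  have hrec : IsLinRecOn s N L := by
    by_cases hz : ∀ i < N, s i = 0
    · have hL0 : L = 0 := by rw [hLdef]; unfold linComplexity; rw [if_pos hz]
      rw [hL0]
      exact ⟨Fin.elim0, fun i hi => by simpa using hz i (by omega)⟩
    · have hne : {L | 0 < L ∧ IsLinRecOn s N L}.Nonempty :=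
        ⟨N, by omega, ⟨fun _ => 0, fun i hi => absurd hi (by omega)⟩⟩
      have hmem : L ∈ {L | 0 < L ∧ IsLinRecOn s N L} := by
        rw [hLdef]; unfold linComplexity; rw [if_neg hz]
        exact Nat.sInf_mem hne
      exact hmem.2
  obtain ⟨cf, hcf⟩ := hrec
  have hLlt : L < 2 ^ L := Nat.lt_two_pow_self
  -- pigeonhole on state vectors
  have hcard : Fintype.card (Fin L → ZMod 2) < Fintype.card (Fin (2 ^ L + 1)) := by
    simp [Fintype.card_fun]
  obtain ⟨a, b, hab, heqab⟩ :=
    Fintype.exists_ne_map_eq_of_card_lt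
      (fun i : Fin (2 ^ L + 1) => fun k : Fin L => s ((i : ℕ) + k)) hcard
  obtain ⟨i, j, hij, hj, hstate⟩ :
      ∃ i j : ℕ, i < j ∧ j ≤ 2 ^ L ∧ ∀ k : Fin L, s (i + k) = s (j + k) := by
    rcases lt_or_gt_of_ne hab with hlt | hlt
    · exact ⟨a, b, hlt, by omega, fun k => congrFun heqab k⟩
    · exact ⟨b, a, hlt, by omega, fun k => (congrFun heqab k).symm⟩
  -- propagate the coincidence of states
  have prop : ∀ n, n + j < N → s (n + i) = s (n + j) := by
    intro n
    induction n using Nat.strong_induction_on with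
    | _ n ih =>
      intro hn
      rcases lt_or_ge n L with h1 | h1
      · have := hstate ⟨n, h1⟩
        simpa [Nat.add_comm] using this
      · have e1 : n + i = (n - L + i) + L := by omega
        have e2 : n + j = (n - L + j) + L := by omega
        rw [e1, e2, hcf _ (by omega), hcf _ (by omega)]
        apply Finset.sum_congr rfl
        intro k _
        congr 1
        have hk : (k : ℕ) < L := k.2
        have := ih (n - L + k) (by omega) (by omega)
        rw [show n - L + i + (k : ℕ) = n - L + (k : ℕ) + i by omega,
            show n - L + j + (k : ℕ) = n - L + (k : ℕ) + j by omega]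
        exact this
  -- produce a large correlation
  have hjN : j + L < N := by omega
  have hmem : N - j ∈ {m : ℕ | ∃ (U : ℕ) (d : Fin 2 → ℕ), U + 2 ≤ N + 1 ∧ StrictMono d ∧
      (∀ t, d t + U ≤ N) ∧
      m = (∑ n ∈ range U, (-1 : ℤ) ^ (∑ t : Fin 2, (s (n + d t)).val)).natAbs} := by
    refine ⟨N - j, ![i, j], by omega, ?_, ?_, ?_⟩
    · intro a b hab
      fin_cases a <;> fin_cases b <;> simp_all <;> omega
    · intro t; fin_cases t <;> simp <;> omega
    · have : ∀ n ∈ range (N - j),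
          (-1 : ℤ) ^ (∑ t : Fin 2, (s (n + ![i, j] t)).val) = 1 := by
        intro n hn
        rw [Fin.sum_univ_two]
        simp only [Matrix.cons_val_zero, Matrix.cons_val_one, Matrix.head_cons]
        rw [prop n (by simp at hn; omega)]
        exact Even.neg_one_pow (Even.add_self _)
      rw [Finset.sum_congr rfl this]
      simp
  have hcorr : N - j ≤ corr s N 2 := le_csSup (corrSet_bdd s N 2) hmem
  have hjhalf : j ≤ N / 2 := le_trans hj hcon
  have h1 : (N : ℝ) ≤ 2 * ((N - j : ℕ) : ℝ) := by
    have : N ≤ 2 * (N - j) := by omega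
    exact_mod_cast this
  have h2 : ((N - j : ℕ) : ℝ) ≤ (corr s N 2 : ℝ) := by exact_mod_cast hcorr
  linarith

/-- **Fermat-quotient corollary, genericized.** For every `ε > 0` and `c > 0` there is `p₀`
such that for every prime `p ≥ p₀`, every `p²`-periodic binary sequence with
`C₂(S,N) ≤ c p (log p)³` for all `N ≤ p²`, and every `N` with
`2c p^{1+ε} (log p)³ < N ≤ p²`, one has `C₂(S,N) < N/2`, hence `2^{L(S,N)} > ⌊N/2⌋` and
`L(S,N) > log₂⌊N/2⌋`. -/
theorem fermat_quotient_linComplexity (ε c : ℝ) (hε : 0 < ε) (hc : 0 < c) :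
    ∃ p₀ : ℕ, ∀ p : ℕ, p₀ ≤ p → p.Prime → ∀ s : ℕ → ZMod 2,
      (∀ i, s (i + p ^ 2) = s i) →
      (∀ N : ℕ, 0 < N → N ≤ p ^ 2 →
        (corr s N 2 : ℝ) ≤ c * p * (Real.logb 2 p) ^ 3) →
      ∀ N : ℕ, 2 * c * (p : ℝ) ^ ((1 : ℝ) + ε) * (Real.logb 2 p) ^ 3 < (N : ℝ) →
        N ≤ p ^ 2 →
        (corr s N 2 : ℝ) < (N : ℝ) / 2 ∧
        N / 2 < 2 ^ linComplexity s N ∧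
        Real.logb 2 (N / 2 : ℕ) < (linComplexity s N : ℝ) := by
  refine ⟨⌈1 / c⌉₊ + 2, fun p hp hprime s hper hbound N hNlow hNhigh => ?_⟩
  have hp2 : (2 : ℝ) ≤ (p : ℝ) := by
    have : 2 ≤ p := by omega
    exact_mod_cast this
  have hpc : 1 / c ≤ (p : ℝ) := le_trans (Nat.le_ceil _) (by exact_mod_cast by omega)
  have hL1 : 1 ≤ Real.logb 2 p := by
    rw [show (1 : ℝ) = Real.logb 2 2 by simp]
    exact Real.logb_le_logb_of_le (by norm_num) (by norm_num) hp2
  have hL3 : 1 ≤ (Real.logb 2 p) ^ 3 := one_le_pow₀ hL1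
  have hpp : (p : ℝ) ≤ (p : ℝ) ^ ((1 : ℝ) + ε) := by
    calc (p : ℝ) = (p : ℝ) ^ (1 : ℝ) := (Real.rpow_one _).symm
      _ ≤ (p : ℝ) ^ ((1 : ℝ) + ε) :=
        Real.rpow_le_rpow_of_exponent_le (by linarith) (by linarith)
  have hmono : 2 * c * (p : ℝ) * (Real.logb 2 p) ^ 3
      ≤ 2 * c * (p : ℝ) ^ ((1 : ℝ) + ε) * (Real.logb 2 p) ^ 3 := by
    gcongr
  have hcp : 2 ≤ 2 * c * (p : ℝ) := by
    have : 1 ≤ c * p := by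
      rw [div_le_iff₀ hc] at hpc
      linarith [hpc]
    linarith
  have h2N : (2 : ℝ) < (N : ℝ) := by
    nlinarith
  have hN2 : 2 ≤ N := by
    have : (2 : ℕ) < N := by exact_mod_cast h2N
    omega
  have hNpos : 0 < N := by omega
  have hcorrlt : (corr s N 2 : ℝ) < (N : ℝ) / 2 := by
    have hb := hbound N hNpos hNhigh
    nlinarith
  have hpow := key_lemma s N hN2 hcorrlt
  refine ⟨hcorrlt, hpow, ?_⟩
  have hhalfpos : 0 < N / 2 := by omega
  have hcast : ((N / 2 : ℕ) : ℝ) < (2 : ℝ) ^ linComplexity s N := by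
    exact_mod_cast hpow
  calc Real.logb 2 ((N / 2 : ℕ) : ℝ)
      < Real.logb 2 ((2 : ℝ) ^ linComplexity s N) := by
        apply Real.logb_lt_logb (by norm_num) (by exact_mod_cast hhalfpos) hcast
    _ = (linComplexity s N : ℝ) := by
        rw [Real.logb_pow]; simp
end

section
/- Let S = (s_i)_{i≥0} and S' = (s'_i)_{i≥0} be binary sequences, N a positive integer, and m a nonnegative integer such that s'_i = s_i for all but at most m indices i with 0 ≤ i < N. Then C_2(S',N) ≤ C_2(S,N) + 4m. -/
open Finset

lemma corr_aux_bdd (s : ℕ → ZMod 2) (N : ℕ) :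
    BddAbove {m : ℕ | ∃ (U : ℕ) (d : Fin 2 → ℕ), U + 2 ≤ N + 1 ∧ StrictMono d ∧
      (∀ j, d j + U ≤ N) ∧
      m = (∑ n ∈ range U, (-1 : ℤ) ^ (∑ j : Fin 2, (s (n + d j)).val)).natAbs} := by
  refine ⟨N, fun x hx => ?_⟩
  obtain ⟨U, d, hU, hd, hdU, rfl⟩ := hx
  calc (∑ n ∈ range U, (-1 : ℤ) ^ (∑ j : Fin 2, (s (n + d j)).val)).natAbs
      ≤ ∑ n ∈ range U, ((-1 : ℤ) ^ (∑ j : Fin 2, (s (n + d j)).val)).natAbs :=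
        nat_abs_sum_le _ _
    _ = ∑ n ∈ range U, 1 := by
        refine Finset.sum_congr rfl fun n _ => ?_
        simp [Int.natAbs_pow]
    _ = U := by simp
    _ ≤ N := le_trans (Nat.le_add_left U (d 0)) (hdU 0)

/-- **Stability of the order-2 correlation measure.** If `s'` differs from `s` in at most `m`
of the indices `0 ≤ i < N`, then `C₂(S',N) ≤ C₂(S,N) + 4m`. -/
theorem corr_two_stability (s s' : ℕ → ZMod 2) (N : ℕ) (hN : 0 < N) (m : ℕ)
    (h : #{i ∈ range N | s' i ≠ s i} ≤ m) :
    corr s' N 2 ≤ corr s N 2 + 4 * m := by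
  have key : corr s' N 2 = sSup {x : ℕ | ∃ (U : ℕ) (d : Fin 2 → ℕ), U + 2 ≤ N + 1 ∧
      StrictMono d ∧ (∀ j, d j + U ≤ N) ∧
      x = (∑ n ∈ range U, (-1 : ℤ) ^ (∑ j : Fin 2, (s' (n + d j)).val)).natAbs} := rfl
  rw [key]; clear key
  apply csSup_le
  · refine ⟨0, 0, ![0, 1], by omega, ?_, ?_, by simp⟩
    · intro a b hab
      fin_cases a <;> fin_cases b <;> simp_all
    · intro j
      fin_cases j <;> simp <;> omega
  · rintro x ⟨U, d, hU, hd, hdU, rfl⟩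
    set f : ℕ → ℤ := fun n => (-1 : ℤ) ^ (∑ j : Fin 2, (s (n + d j)).val) with hf
    set g : ℕ → ℤ := fun n => (-1 : ℤ) ^ (∑ j : Fin 2, (s' (n + d j)).val) with hg
    have h1 : (∑ n ∈ range U, f n).natAbs ≤ corr s N 2 :=
      le_csSup (corr_aux_bdd s N) ⟨U, d, hU, hd, hdU, rfl⟩
    set Δ := {i ∈ range N | s' i ≠ s i} with hΔ
    set bad := {n ∈ range U | g n ≠ f n} with hbad
    have hsub : bad ⊆ Δ.image (· - d 0) ∪ Δ.image (· - d 1) := by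
      intro n hn
      simp only [hbad, mem_filter, mem_range] at hn
      obtain ⟨hnU, hne⟩ := hn
      have hor : s' (n + d 0) ≠ s (n + d 0) ∨ s' (n + d 1) ≠ s (n + d 1) := by
        by_contra hc
        push_neg at hc
        exact hne (by simp [hg, hf, Fin.sum_univ_two, hc.1, hc.2])
      rcases hor with h0 | h0
      · apply mem_union_left
        refine mem_image.2 ⟨n + d 0, ?_, by omega⟩
        simp only [hΔ, mem_filter, mem_range]
        exact ⟨by have := hdU 0; omega, h0⟩
      · apply mem_union_right
        refine mem_image.2 ⟨n + d 1, ?_, by omega⟩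
        simp only [hΔ, mem_filter, mem_range]
        exact ⟨by have := hdU 1; omega, h0⟩
    have hcard : bad.card ≤ 2 * m := by
      calc bad.card ≤ (Δ.image (· - d 0) ∪ Δ.image (· - d 1)).card := card_le_card hsub
        _ ≤ (Δ.image (· - d 0)).card + (Δ.image (· - d 1)).card := card_union_le _ _
        _ ≤ Δ.card + Δ.card := add_le_add card_image_le card_image_le
        _ ≤ 2 * m := by omega
    have hdiff : ∑ n ∈ range U, g n - ∑ n ∈ range U, f n = ∑ n ∈ bad, (g n - f n) := by
      rw [← Finset.sum_sub_distrib]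
      exact (Finset.sum_filter_of_ne (fun n _ hne => sub_ne_zero.mp hne)).symm
    have habs : |∑ n ∈ range U, g n| ≤ |∑ n ∈ range U, f n| + 4 * m := by
      have h2 : |∑ n ∈ bad, (g n - f n)| ≤ 2 * bad.card := by
        calc |∑ n ∈ bad, (g n - f n)| ≤ ∑ n ∈ bad, |g n - f n| := Finset.abs_sum_le_sum_abs _ _
          _ ≤ ∑ n ∈ bad, 2 := by
              refine Finset.sum_le_sum fun n _ => ?_
              calc |g n - f n| ≤ |g n| + |f n| := abs_sub _ _
                _ ≤ 2 := by simp [hg, hf, abs_pow]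
          _ = 2 * bad.card := by
              rw [Finset.sum_const]; push_cast; ring
      calc |∑ n ∈ range U, g n|
          = |∑ n ∈ range U, f n + (∑ n ∈ range U, g n - ∑ n ∈ range U, f n)| := by
            congr 1; ring
        _ ≤ |∑ n ∈ range U, f n| + |∑ n ∈ range U, g n - ∑ n ∈ range U, f n| := abs_add_le _ _
        _ ≤ |∑ n ∈ range U, f n| + 2 * bad.card := by rw [hdiff]; exact add_le_add le_rfl h2
        _ ≤ |∑ n ∈ range U, f n| + 4 * m := by
            have : (bad.card : ℤ) ≤ 2 * m := by exact_mod_cast hcard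
            push_cast
            linarith
    have h3 : (∑ n ∈ range U, g n).natAbs ≤ (∑ n ∈ range U, f n).natAbs + 4 * m := by
      rw [Int.abs_eq_natAbs, Int.abs_eq_natAbs] at habs
      exact_mod_cast habs
    exact le_trans h3 (Nat.add_le_add_right h1 _)
end

section
/- Let ℓ ≥ 4 be an even integer and S a (2^ℓ − 1)-periodic binary sequence whose linear complexity is at most 3ℓ/2 (as is the case for sequences from the small Kasami family). Then there exists an integer k with 1 < k ≤ 5 such that S has a full peak in the periodic correlation measure of order k, i.e. θ_k(S) = 2^ℓ − 1. -/
open Finset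

lemma pow_aux {l : ℕ} (h : 4 ≤ l) : 3 * l + 2 ≤ 2 ^ l := by
  induction l, h using Nat.le_induction with
  | base => norm_num
  | succ n hn ih => rw [pow_succ]; omega

lemma count_aux {m : ℕ} (hm : 2 ≤ m) :
    2 * 2 ^ (3 * m) + 1 ≤ (2 ^ (m + m) - 1) * (2 ^ (m + m) - 1 - 1) := by
  have hx : 4 ≤ 2 ^ m := by
    calc (4:ℕ) = 2 ^ 2 := rfl
    _ ≤ 2 ^ m := Nat.pow_le_pow_right (by norm_num) hm
  have h1 : 2 ^ (m + m) = 2 ^ m * 2 ^ m := by rw [pow_add]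
  have h2 : 2 ^ (3 * m) = 2 ^ m * 2 ^ m * 2 ^ m := by
    rw [show 3 * m = m + m + m by ring, pow_add, pow_add]
  set x := 2 ^ m with hxdef
  clear_value x
  have h16 : 16 ≤ x * x := Nat.mul_le_mul hx hx
  rw [h1, h2]
  obtain ⟨b, hb⟩ : ∃ b, x * x = b + 2 := ⟨x * x - 2, by omega⟩
  rw [hb, show b + 2 - 1 = b + 1 by omega, show b + 1 - 1 = b by omega]
  have k1 : 4 * (x * x * x) ≤ x * (x * x * x) := Nat.mul_le_mul_right _ hx
  have k2 : 4 * (x * x) ≤ x * (x * x) := Nat.mul_le_mul_right _ hx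
  nlinarith [hb, k1, k2, hx]

/-- Two sums of shifts of a sequence satisfying a linear recurrence of order `L`
agreeing on the first `L` values agree everywhere. -/
lemma ext_aux (s : ℕ → ZMod 2) (L : ℕ) (c : Fin L → ZMod 2)
    (hrec : ∀ i, s (i + L) = ∑ j : Fin L, c j * s (i + j))
    (A B : Finset ℕ)
    (h : ∀ j < L, ∑ a ∈ A, s (j + a) = ∑ b ∈ B, s (j + b)) :
    ∀ n, ∑ a ∈ A, s (n + a) = ∑ b ∈ B, s (n + b) := by
  intro n
  induction n using Nat.strong_induction_on with
  | _ n ih =>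
    rcases lt_or_ge n L with hn | hn
    · exact h n hn
    · have e : ∀ (C : Finset ℕ),
          ∑ a ∈ C, s (n + a) = ∑ j : Fin L, c j * ∑ a ∈ C, s ((n - L + j) + a) := by
        intro C
        calc ∑ a ∈ C, s (n + a)
            = ∑ a ∈ C, ∑ j : Fin L, c j * s ((n - L + j) + a) := by
              refine Finset.sum_congr rfl fun a _ => ?_
              rw [show n + a = (n - L + a) + L by omega, hrec]
              refine Finset.sum_congr rfl fun j _ => ?_
              have : n - L + a + (j:ℕ) = n - L + (j:ℕ) + a := by omega
              rw [this]
          _ = ∑ j : Fin L, ∑ a ∈ C, c j * s ((n - L + j) + a) := Finset.sum_comm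
          _ = ∑ j : Fin L, c j * ∑ a ∈ C, s ((n - L + j) + a) := by
              simp [Finset.mul_sum]
      rw [e A, e B]
      refine Finset.sum_congr rfl fun j _ => ?_
      rw [ih (n - L + j) (by have := j.isLt; omega)]

/-- If some sum of `k` distinct shifts of `s` vanishes identically, then `pcorr s T k = T`. -/
lemma peak_of_zero (s : ℕ → ZMod 2) (T k : ℕ) (d : Fin k → ℕ)
    (hmono : StrictMono d) (hlt : ∀ j, d j < T)
    (hz : ∀ n, ∑ j : Fin k, s (n + d j) = 0) :
    pcorr s T k = T := by
  have hterm : ∀ n, (-1:ℤ) ^ (∑ j : Fin k, (s (n + d j)).val) = 1 := by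
    intro n
    have hc : ((∑ j : Fin k, (s (n + d j)).val : ℕ) : ZMod 2) = 0 := by
      push_cast
      rw [Finset.sum_congr rfl fun j _ => ZMod.natCast_rightInverse (s (n + d j))]
      exact hz n
    obtain ⟨t, ht⟩ := (ZMod.natCast_eq_zero_iff _ 2).mp hc
    exact Even.neg_one_pow ⟨t, by omega⟩
  have hbound : ∀ x ∈ {m : ℕ | ∃ d : Fin k → ℕ, StrictMono d ∧ (∀ j, d j < T) ∧
      m = (∑ n ∈ range T, (-1 : ℤ) ^ (∑ j : Fin k, (s (n + d j)).val)).natAbs}, x ≤ T := by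
    rintro x ⟨d', -, -, rfl⟩
    have h1 : |∑ n ∈ range T, (-1 : ℤ) ^ (∑ j : Fin k, (s (n + d' j)).val)| ≤ (T : ℤ) := by
      calc |∑ n ∈ range T, (-1 : ℤ) ^ (∑ j : Fin k, (s (n + d' j)).val)|
          ≤ ∑ n ∈ range T, |(-1 : ℤ) ^ (∑ j : Fin k, (s (n + d' j)).val)| :=
            Finset.abs_sum_le_sum_abs _ _
        _ ≤ (T : ℤ) := by simp [abs_pow]
    exact_mod_cast (Int.abs_eq_natAbs _ ▸ h1)
  have hmem : T ∈ {m : ℕ | ∃ d : Fin k → ℕ, StrictMono d ∧ (∀ j, d j < T) ∧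
      m = (∑ n ∈ range T, (-1 : ℤ) ^ (∑ j : Fin k, (s (n + d j)).val)).natAbs} := by
    refine ⟨d, hmono, hlt, ?_⟩
    rw [Finset.sum_congr rfl fun n _ => hterm n]
    simp
  refine le_antisymm (csSup_le ⟨T, hmem⟩ hbound) (le_csSup ⟨T, hbound⟩ hmem)


/-- **Small Kasami family.** For even `ℓ ≥ 4`, a `(2^ℓ - 1)`-periodic binary sequence with
linear complexity at most `3ℓ/2` has a full peak in the periodic correlation measure of some
order `k` with `1 < k ≤ 5`. -/
theorem small_kasami_peak (ℓ : ℕ) (hℓ : 4 ≤ ℓ) (heven : Even ℓ) (s : ℕ → ZMod 2)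
    (hper : ∀ i, s (i + (2 ^ ℓ - 1)) = s i)
    (hL : linComplexity s (2 * (2 ^ ℓ - 1)) ≤ 3 * ℓ / 2) :
    ∃ k, 1 < k ∧ k ≤ 5 ∧ pcorr s (2 ^ ℓ - 1) k = 2 ^ ℓ - 1 := by
  obtain ⟨m, rfl⟩ := heven
  have hm : 2 ≤ m := by omega
  set T := 2 ^ (m + m) - 1 with hTdef
  have hpow := pow_aux (show 4 ≤ m + m by omega)
  have h16 : 16 ≤ 2 ^ (m + m) := by
    calc (16:ℕ) = 2 ^ 4 := rfl
    _ ≤ 2 ^ (m + m) := Nat.pow_le_pow_right (by norm_num) (by omega)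
  have hT15 : 15 ≤ T := by omega
  -- Step 1: a linear recurrence of order L ≤ 3m valid on [0, 2T)
  obtain ⟨L, hL0, hLle, c, hrec⟩ :
      ∃ L, 0 < L ∧ L ≤ 3 * m ∧ ∃ c : Fin L → ZMod 2,
        ∀ i, i + L < 2 * T → s (i + L) = ∑ j : Fin L, c j * s (i + j) := by
    unfold linComplexity at hL
    split_ifs at hL with h0
    · refine ⟨1, one_pos, by omega, fun _ => 0, fun i hi => ?_⟩
      rw [h0 (i + 1) (by omega)]
      simp
    · have hne : {L | 0 < L ∧ IsLinRecOn s (2 * T) L}.Nonempty :=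
        ⟨2 * T, by omega, fun _ => 0, fun i hi => absurd hi (by omega)⟩
      obtain ⟨hpos, c, hc⟩ := Nat.sInf_mem hne
      exact ⟨_, hpos, by omega, c, hc⟩
  have hLT : L < T := by omega
  -- Step 2: the recurrence holds everywhere, by periodicity
  have hperT : ∀ i q, s (i + q * T) = s i := by
    intro i q
    induction q with
    | zero => simp
    | succ q ih =>
      rw [show i + (q + 1) * T = i + q * T + T by ring, hper (i + q * T), ih]
  have hrecAll : ∀ i, s (i + L) = ∑ j : Fin L, c j * s (i + j) := by
    intro i
    have hmod : i % T < T := Nat.mod_lt _ (by omega)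
    have key : ∀ j, s (i + j) = s (i % T + j) := by
      intro j
      conv_lhs => rw [← Nat.mod_add_div i T]
      rw [show i % T + T * (i / T) + j = (i % T + j) + (i / T) * T by ring]
      exact hperT _ _
    have hsum : ∑ j : Fin L, c j * s (i + j) = ∑ j : Fin L, c j * s (i % T + j) :=
      Finset.sum_congr rfl fun j _ => by rw [key j]
    rw [key L, hsum]
    exact hrec (i % T) (by omega)
  -- Step 3: pigeonhole over 2-element subsets of Fin T
  set G : Finset (Fin T) → (Fin L → ZMod 2) :=
    fun A j => ∑ a ∈ A, s ((j : ℕ) + (a : ℕ)) with hGdef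
  have hcard : (univ : Finset (Fin L → ZMod 2)).card
      < (Finset.powersetCard 2 (univ : Finset (Fin T))).card := by
    simp only [Finset.card_powersetCard, Finset.card_univ, Fintype.card_fun,
      Fintype.card_fin, ZMod.card, Nat.choose_two_right]
    have h1 := count_aux hm
    rw [← hTdef] at h1
    have h2 : (2:ℕ) ^ L ≤ 2 ^ (3 * m) := Nat.pow_le_pow_right (by norm_num) hLle
    have h3 : Even ((T - 1) * T) := by
      have := Nat.even_mul_succ_self (T - 1)
      rwa [show T - 1 + 1 = T by omega] at this
    obtain ⟨t, ht⟩ := h3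
    have h4 : T * (T - 1) = t + t := by rw [← ht]; ring
    omega
  obtain ⟨A, hA, B, hB, hABne, hGAB⟩ :=
    Finset.exists_ne_map_eq_of_card_lt_of_maps_to hcard (fun A _ => Finset.mem_univ (G A))
  have hAcard : A.card = 2 := (Finset.mem_powersetCard.mp hA).2
  have hBcard : B.card = 2 := (Finset.mem_powersetCard.mp hB).2
  set A' : Finset ℕ := A.image Fin.val with hA'def
  set B' : Finset ℕ := B.image Fin.val with hB'def
  have hinj : Function.Injective (Fin.val : Fin T → ℕ) := Fin.val_injective
  have hinit : ∀ j < L, ∑ a ∈ A', s (j + a) = ∑ b ∈ B', s (j + b) := by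
    intro j hj
    have := congrFun hGAB ⟨j, hj⟩
    simp only [hGdef] at this
    rw [hA'def, hB'def, Finset.sum_image (fun a _ b _ h => hinj h),
      Finset.sum_image (fun a _ b _ h => hinj h)]
    simpa using this
  have hall := ext_aux s L c hrecAll A' B' hinit
  -- Step 4: the symmetric difference gives a vanishing sum of shifts
  set D : Finset ℕ := (A' \ B') ∪ (B' \ A') with hDdef
  have hDzero : ∀ n, ∑ d ∈ D, s (n + d) = 0 := by
    intro n
    have hsplit : ∀ C C' : Finset ℕ,
        ∑ a ∈ C, s (n + a) = ∑ a ∈ C \ C', s (n + a) + ∑ a ∈ C ∩ C', s (n + a) := by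
      intro C C'
      rw [← Finset.sum_sdiff (Finset.inter_subset_left (s₂ := C')), Finset.sdiff_inter_self_left]
    have hD : ∑ d ∈ D, s (n + d) = ∑ a ∈ A' \ B', s (n + a) + ∑ a ∈ B' \ A', s (n + a) :=
      Finset.sum_union disjoint_sdiff_sdiff
    have h1 := hsplit A' B'
    have h2 := hsplit B' A'
    have h3 := hall n
    rw [Finset.inter_comm B' A'] at h2
    have h4 : ∑ a ∈ A' ∩ B', s (n + a) + ∑ a ∈ A' ∩ B', s (n + a) = 0 :=
      CharTwo.add_self_eq_zero _
    calc ∑ d ∈ D, s (n + d)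
        = ∑ d ∈ D, s (n + d) + (∑ a ∈ A' ∩ B', s (n + a) + ∑ a ∈ A' ∩ B', s (n + a)) := by
          rw [h4, add_zero]
      _ = (∑ a ∈ A' \ B', s (n + a) + ∑ a ∈ B' \ A', s (n + a))
          + (∑ a ∈ A' ∩ B', s (n + a) + ∑ a ∈ A' ∩ B', s (n + a)) := by rw [hD]
      _ = (∑ a ∈ A' \ B', s (n + a) + ∑ a ∈ A' ∩ B', s (n + a))
          + (∑ a ∈ B' \ A', s (n + a) + ∑ a ∈ A' ∩ B', s (n + a)) := by ring
      _ = ∑ a ∈ A', s (n + a) + ∑ a ∈ B', s (n + a) := by rw [← h1, ← h2]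
      _ = ∑ a ∈ B', s (n + a) + ∑ a ∈ B', s (n + a) := by rw [h3]
      _ = 0 := CharTwo.add_self_eq_zero _
  have hDlt : ∀ d ∈ D, d < T := by
    intro d hd
    rcases Finset.mem_union.mp hd with h | h
    · obtain ⟨a, -, rfl⟩ := Finset.mem_image.mp (Finset.mem_sdiff.mp h).1
      exact a.isLt
    · obtain ⟨a, -, rfl⟩ := Finset.mem_image.mp (Finset.mem_sdiff.mp h).1
      exact a.isLt
  have hDne : D.Nonempty := by
    rw [Finset.nonempty_iff_ne_empty]
    intro hemp
    rw [hDdef, Finset.union_eq_empty, Finset.sdiff_eq_empty_iff_subset,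
      Finset.sdiff_eq_empty_iff_subset] at hemp
    exact hABne (Finset.image_injective hinj (Finset.Subset.antisymm hemp.1 hemp.2))
  have hDcard : D.card ≤ 4 := by
    calc D.card ≤ (A' ∪ B').card := Finset.card_le_card
          (Finset.union_subset_union Finset.sdiff_subset Finset.sdiff_subset)
      _ ≤ A'.card + B'.card := Finset.card_union_le _ _
      _ ≤ 4 := by
          rw [hA'def, hB'def, Finset.card_image_of_injective _ hinj,
            Finset.card_image_of_injective _ hinj, hAcard, hBcard]
  -- Step 5: conclude
  by_cases h1 : D.card = 1
  · -- a single vanishing shift: s is identically zero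
    obtain ⟨d₀, hd₀⟩ := Finset.card_eq_one.mp h1
    have hz1 : ∀ n, s (n + d₀) = 0 := by
      intro n
      have := hDzero n
      rw [hd₀, Finset.sum_singleton] at this
      simpa using this
    have hd₀T : d₀ < T := hDlt d₀ (hd₀ ▸ Finset.mem_singleton_self d₀)
    have hzall : ∀ n, s n = 0 := by
      intro n
      rw [← hper n, show n + T = (n + T - d₀) + d₀ by omega]
      exact hz1 _
    refine ⟨2, by norm_num, by norm_num, peak_of_zero s T 2 (fun j => (j : ℕ))
      (fun a b hab => hab) (fun j => lt_of_lt_of_le j.isLt (by omega))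
      (fun n => by simp [hzall])⟩
  · -- D has between 2 and 4 elements
    have hk2 : 2 ≤ D.card := by
      have := hDne.card_pos
      omega
    refine ⟨D.card, by omega, by omega, peak_of_zero s T D.card (D.orderEmbOfFin rfl)
      (D.orderEmbOfFin rfl).strictMono
      (fun j => hDlt _ (Finset.orderEmbOfFin_mem D rfl j)) ?_⟩
    intro n
    have hsum : ∑ j ∈ (univ : Finset (Fin D.card)), s (n + D.orderEmbOfFin rfl j)
        = ∑ d ∈ D, s (n + d) := by
      refine Finset.sum_bij (fun j _ => D.orderEmbOfFin rfl j)
        (fun j _ => Finset.orderEmbOfFin_mem D rfl j)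
        (fun a _ b _ h => (D.orderEmbOfFin rfl).injective h) ?_ (fun j _ => rfl)
      intro d hd
      have : d ∈ Set.range (⇑(D.orderEmbOfFin rfl)) := by
        rw [Finset.range_orderEmbOfFin]
        exact hd
      obtain ⟨j, hj⟩ := this
      exact ⟨j, Finset.mem_univ j, hj⟩
    rw [hsum]
    exact hDzero n
end

section
/- Let ℓ ≥ 4 be an even integer and S a (2^ℓ − 1)-periodic binary sequence whose linear complexity is at most 5ℓ/2 (as is the case for sequences from the large Kasami family). Then there exists an integer k with 1 < k ≤ 9 such that S has a full peak in the periodic correlation measure of order k, i.e. θ_k(S) = 2^ℓ − 1. -/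
open Finset

lemma aux_per_mod (s : ℕ → ZMod 2) (T : ℕ) (hT : 0 < T)
    (hper : ∀ i, s (i + T) = s i) (n : ℕ) : s n = s (n % T) := by
  induction n using Nat.strong_induction_on with
  | _ n ih =>
    rcases lt_or_ge n T with h | h
    · rw [Nat.mod_eq_of_lt h]
    · have h1 : n - T + T = n := Nat.sub_add_cancel h
      have h2 := hper (n - T)
      rw [h1] at h2
      rw [h2, ih (n - T) (by omega), ← Nat.mod_eq_sub_mod h]

lemma aux_rec_det (L : ℕ) (hL : 0 < L) (c : Fin L → ZMod 2)
    (u v : ℕ → ZMod 2)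
    (hu : ∀ i, u (i + L) = ∑ j : Fin L, c j * u (i + j))
    (hv : ∀ i, v (i + L) = ∑ j : Fin L, c j * v (i + j))
    (h0 : ∀ j < L, u j = v j) : ∀ n, u n = v n := by
  intro n
  induction n using Nat.strong_induction_on with
  | _ n ih =>
    rcases lt_or_ge n L with h | h
    · exact h0 n h
    · have hn : n - L + L = n := Nat.sub_add_cancel h
      rw [← hn, hu, hv]
      refine Finset.sum_congr rfl fun j _ => ?_
      rw [ih (n - L + j) (by have := j.isLt; omega)]

lemma aux_choose_big (m : ℕ) (hm : 2 ≤ m) : 2 ^ (5 * m) < (4 ^ m - 1).choose 4 := by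
  rcases eq_or_lt_of_le hm with rfl | hm3
  · norm_num [Nat.choose]
  · have hm3 : 3 ≤ m := hm3
    set n := 4 ^ m with hn
    have h64 : 64 ≤ n := by
      calc (64 : ℕ) = 4 ^ 3 := by norm_num
        _ ≤ 4 ^ m := Nat.pow_le_pow_right (by norm_num) hm3
    have hd : (n - 1).descFactorial 4 = (n-1)*(n-2)*(n-3)*(n-4) := by
      simp only [Nat.descFactorial_succ, Nat.descFactorial_zero, mul_one, Nat.sub_zero]
      have e1 : n - 1 - 1 = n - 2 := by omega
      have e2 : n - 1 - 2 = n - 3 := by omega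
      have e3 : n - 1 - 3 = n - 4 := by omega
      rw [e1, e2, e3]; ring
    have hfc : (n - 1).descFactorial 4 = 24 * (n-1).choose 4 := by
      rw [Nat.descFactorial_eq_factorial_mul_choose]; norm_num [Nat.factorial]
    have hstep : 3 * 4 ^ (m - 1) ≤ n - 4 := by
      have : 4 * 4 ^ (m - 1) = n := by
        rw [hn, ← pow_succ']
        congr 1; omega
      have h4 : 4 ≤ 4 ^ (m - 1) := by
        calc (4:ℕ) = 4 ^ 1 := by norm_num
          _ ≤ 4 ^ (m-1) := Nat.pow_le_pow_right (by norm_num) (by omega)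
      omega
    have hprod : (n-4)*(n-4)*(n-4)*(n-4) ≤ (n-1)*(n-2)*(n-3)*(n-4) := by
      have h1 : n - 4 ≤ n - 1 := by omega
      have h2 : n - 4 ≤ n - 2 := by omega
      have h3 : n - 4 ≤ n - 3 := by omega
      exact Nat.mul_le_mul (Nat.mul_le_mul (Nat.mul_le_mul h1 h2) h3) le_rfl
    have hpow4 : (3 * 4 ^ (m-1))^4 ≤ (n-4)*(n-4)*(n-4)*(n-4) := by
      calc (3 * 4 ^ (m-1))^4 ≤ (n-4)^4 := Nat.pow_le_pow_left hstep 4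
        _ = (n-4)*(n-4)*(n-4)*(n-4) := by ring
    have hlhs : 24 * 2 ^ (5 * m) < (3 * 4 ^ (m-1))^4 := by
      have heq : (3 * 4 ^ (m-1))^4 = 81 * 2 ^ (8 * m - 8) := by
        rw [mul_pow]
        norm_num
        rw [← pow_mul, show (4:ℕ) = 2^2 by norm_num, ← pow_mul]
        congr 1
        omega
      rw [heq]
      have hsplit : 2 ^ (8*m - 8) = 2 ^ (5*m) * 2 ^ (3*m - 8) := by
        rw [← pow_add]; congr 1; omega
      have h2 : 2 ≤ 2 ^ (3*m-8) := by
        calc (2:ℕ) = 2^1 := by norm_num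
          _ ≤ 2 ^ (3*m-8) := Nat.pow_le_pow_right (by norm_num) (by omega)
      have hp : 0 < 2 ^ (5*m) := Nat.pow_pos (by norm_num)
      calc 24 * 2 ^ (5*m) < 162 * 2^(5*m) := by
            exact (Nat.mul_lt_mul_right hp).mpr (by norm_num)
        _ = 81 * 2^(5*m) * 2 := by ring
        _ ≤ 81 * 2^(5*m) * 2^(3*m-8) := Nat.mul_le_mul_left _ h2
        _ = 81 * 2 ^ (8*m-8) := by rw [hsplit]; ring
    have hfin : 24 * 2 ^ (5*m) < 24 * (n-1).choose 4 := by
      calc 24 * 2 ^ (5*m) < (3 * 4^(m-1))^4 := hlhs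
        _ ≤ (n-4)*(n-4)*(n-4)*(n-4) := hpow4
        _ ≤ (n-1)*(n-2)*(n-3)*(n-4) := hprod
        _ = 24 * (n-1).choose 4 := by rw [← hd, hfc]
    exact Nat.lt_of_mul_lt_mul_left hfin

lemma aux_three_mul (ℓ : ℕ) (h : 4 ≤ ℓ) : 3 * ℓ + 1 ≤ 2 ^ ℓ := by
  induction ℓ with
  | zero => omega
  | succ n ih =>
    rcases Nat.lt_or_ge n 4 with h4 | h4
    · interval_cases n <;> simp_all
    · have h1 := ih (by omega)
      have h2 : 2 ^ n ≥ 13 := by omega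
      rw [pow_succ]
      omega

lemma aux_pcorr_eq (s : ℕ → ZMod 2) (T k : ℕ)
    (d : Fin k → ℕ) (hmono : StrictMono d) (hdT : ∀ j, d j < T)
    (hev : ∀ n, Even (∑ j : Fin k, (s (n + d j)).val)) :
    pcorr s T k = T := by
  set P := {m : ℕ | ∃ d : Fin k → ℕ, StrictMono d ∧ (∀ j, d j < T) ∧
    m = (∑ n ∈ range T, (-1 : ℤ) ^ (∑ j : Fin k, (s (n + d j)).val)).natAbs} with hP
  have hub : ∀ m ∈ P, m ≤ T := by
    rintro m ⟨dd, -, -, rfl⟩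
    have habs : |∑ n ∈ range T, (-1 : ℤ) ^ (∑ j : Fin k, (s (n + dd j)).val)| ≤ (T : ℤ) := by
      calc |∑ n ∈ range T, (-1 : ℤ) ^ (∑ j : Fin k, (s (n + dd j)).val)|
          ≤ ∑ n ∈ range T, |(-1 : ℤ) ^ (∑ j : Fin k, (s (n + dd j)).val)| :=
            Finset.abs_sum_le_sum_abs _ _
        _ ≤ (T : ℤ) := le_of_eq (by
            rw [Finset.sum_congr rfl
              (fun n _ => by rw [abs_pow, abs_neg, abs_one, one_pow] : ∀ n ∈ range T,
                |(-1 : ℤ) ^ (∑ j : Fin k, (s (n + dd j)).val)| = 1)]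
            simp)
    rw [Int.abs_eq_natAbs] at habs
    exact_mod_cast habs
  have hmem : (T : ℕ) ∈ P := by
    refine ⟨d, hmono, hdT, ?_⟩
    have h1 : ∀ n ∈ range T, (-1 : ℤ) ^ (∑ j : Fin k, (s (n + d j)).val) = 1 :=
      fun n _ => (hev n).neg_one_pow
    rw [Finset.sum_congr rfl h1]
    simp
  rw [pcorr, ← hP]
  exact le_antisymm (csSup_le ⟨T, hmem⟩ hub) (le_csSup ⟨T, hub⟩ hmem)

/-- **Large Kasami family.** For even `ℓ ≥ 4`, a `(2^ℓ - 1)`-periodic binary sequence with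
linear complexity at most `5ℓ/2` has a full peak in the periodic correlation measure of some
order `k` with `1 < k ≤ 9`. -/
theorem large_kasami_peak (ℓ : ℕ) (hℓ : 4 ≤ ℓ) (heven : Even ℓ) (s : ℕ → ZMod 2)
    (hper : ∀ i, s (i + (2 ^ ℓ - 1)) = s i)
    (hL : linComplexity s (2 * (2 ^ ℓ - 1)) ≤ 5 * ℓ / 2) :
    ∃ k, 1 < k ∧ k ≤ 9 ∧ pcorr s (2 ^ ℓ - 1) k = 2 ^ ℓ - 1 := by
  have h16 : 16 ≤ 2 ^ ℓ := by
    calc (16:ℕ) = 2 ^ 4 := by norm_num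
      _ ≤ 2 ^ ℓ := Nat.pow_le_pow_right (by norm_num) hℓ
  set T := 2 ^ ℓ - 1 with hTdef
  set N := 2 * T with hNdef
  have hTpos : 0 < T := by omega
  have hT15 : 15 ≤ T := by omega
  by_cases h0 : ∀ i < N, s i = 0
  · -- the zero sequence
    have hz : ∀ n, s n = 0 := fun n => by
      rw [aux_per_mod s T hTpos hper n]
      exact h0 _ (lt_of_lt_of_le (Nat.mod_lt n hTpos) (by omega))
    refine ⟨2, one_lt_two, by norm_num, ?_⟩
    refine aux_pcorr_eq s T 2 (fun j => (j : ℕ)) (fun a b hab => hab)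
      (fun j => lt_of_lt_of_le j.isLt (by omega)) ?_
    intro n
    simp [hz]
  · -- positive linear complexity
    rw [linComplexity, if_neg h0] at hL
    have hSne : {L | 0 < L ∧ IsLinRecOn s N L}.Nonempty :=
      ⟨N, by omega, ⟨fun _ => 0, fun i hi => absurd hi (by omega)⟩⟩
    set L := sInf {L | 0 < L ∧ IsLinRecOn s N L} with hLdef
    obtain ⟨hLpos, c, hc⟩ := Nat.sInf_mem hSne
    -- bound on L
    obtain ⟨m, hm⟩ := heven
    have hm2 : 2 ≤ m := by omega
    have h3ℓ := aux_three_mul ℓ hℓ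
    have hLle : L ≤ 5 * m := by omega
    have hLT : L ≤ T := by omega
    -- the recurrence holds everywhere
    have hper' : ∀ i m', s (i + m') = s (i % T + m') := by
      intro i m'
      rw [aux_per_mod s T hTpos hper (i + m'), aux_per_mod s T hTpos hper (i % T + m')]
      congr 1
      conv_lhs => rw [Nat.add_mod]
      conv_rhs => rw [Nat.add_mod, Nat.mod_mod_of_dvd _ dvd_rfl]
    have hrec : ∀ i, s (i + L) = ∑ j : Fin L, c j * s (i + j) := by
      intro i
      have h1 : i % T + L < N := by
        have := Nat.mod_lt i hTpos
        omega
      rw [hper' i L, hc (i % T) h1]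
      exact Finset.sum_congr rfl fun j _ => by rw [← hper' i j]
    -- sums over subsets
    set U : Finset ℕ → ℕ → ZMod 2 := fun A n => ∑ e ∈ A, s (n + e) with hUdef
    have hurec : ∀ (A : Finset ℕ) i, U A (i + L) = ∑ j : Fin L, c j * U A (i + j) := by
      intro A i
      show (∑ e ∈ A, s (i + L + e)) = ∑ j : Fin L, c j * ∑ e ∈ A, s (i + (j:ℕ) + e)
      calc ∑ e ∈ A, s (i + L + e) = ∑ e ∈ A, s ((i + e) + L) :=
            Finset.sum_congr rfl fun e _ => by rw [show i + L + e = i + e + L by ring]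
        _ = ∑ e ∈ A, ∑ j : Fin L, c j * s ((i + e) + j) :=
            Finset.sum_congr rfl fun e _ => hrec (i + e)
        _ = ∑ j : Fin L, ∑ e ∈ A, c j * s (i + e + (j:ℕ)) := Finset.sum_comm
        _ = ∑ j : Fin L, c j * ∑ e ∈ A, s (i + (j:ℕ) + e) := by
            refine Finset.sum_congr rfl fun j _ => ?_
            rw [Finset.mul_sum]
            exact Finset.sum_congr rfl fun e _ => by
              rw [show i + e + (j:ℕ) = i + (j:ℕ) + e by ring]
    -- pigeonhole
    set 𝒜 := (range T).powersetCard 4 with h𝒜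
    have hcard : (Finset.univ : Finset (Fin L → ZMod 2)).card < 𝒜.card := by
      rw [Finset.card_univ, Fintype.card_fun, Fintype.card_fin, ZMod.card,
        h𝒜, Finset.card_powersetCard, card_range]
      calc (2:ℕ) ^ L ≤ 2 ^ (5 * m) := Nat.pow_le_pow_right (by norm_num) hLle
        _ < (4 ^ m - 1).choose 4 := aux_choose_big m hm2
        _ = T.choose 4 := by
            congr 1
            rw [hTdef, show (4:ℕ) = 2^2 by norm_num, ← pow_mul]
            congr 2
            omega
    obtain ⟨A, hA, B, hB, hABne, hFeq⟩ :=
      Finset.exists_ne_map_eq_of_card_lt_of_maps_to hcard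
        (f := fun A (j : Fin L) => U A (j : ℕ)) (fun A _ => Finset.mem_univ _)
    obtain ⟨hA1, hA4⟩ := Finset.mem_powersetCard.mp hA
    obtain ⟨hB1, hB4⟩ := Finset.mem_powersetCard.mp hB
    have hUeq : ∀ n, U A n = U B n :=
      aux_rec_det L hLpos c (U A) (U B) (hurec A) (hurec B)
        (fun j hj => congrFun hFeq ⟨j, hj⟩)
    set D := (A \ B) ∪ (B \ A) with hDdef
    have hDsub : D ⊆ range T :=
      Finset.union_subset (Finset.sdiff_subset.trans hA1) (Finset.sdiff_subset.trans hB1)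
    have hDzero : ∀ n, ∑ e ∈ D, s (n + e) = 0 := by
      intro n
      rw [hDdef, Finset.sum_union disjoint_sdiff_sdiff]
      have e1 : ∑ e ∈ A ∩ B, s (n + e) + ∑ e ∈ A \ B, s (n + e) = U A n :=
        Finset.sum_inter_add_sum_sdiff A B _
      have e2 : ∑ e ∈ B ∩ A, s (n + e) + ∑ e ∈ B \ A, s (n + e) = U B n :=
        Finset.sum_inter_add_sum_sdiff B A _
      rw [Finset.inter_comm B A, ← hUeq n, ← e1] at e2
      have e3 : ∑ e ∈ A \ B, s (n + e) = ∑ e ∈ B \ A, s (n + e) := (add_left_cancel e2).symm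
      rw [e3, CharTwo.add_self_eq_zero]
    -- cardinalities
    have hiA : (A \ B).card + (A ∩ B).card = 4 := by
      rw [Finset.card_sdiff_add_card_inter, hA4]
    have hiB : (B \ A).card + (B ∩ A).card = 4 := by
      rw [Finset.card_sdiff_add_card_inter, hB4]
    have hinter : (A ∩ B).card = (B ∩ A).card := by rw [Finset.inter_comm]
    have hinterlt : (A ∩ B).card ≤ 3 := by
      by_contra hcon
      push_neg at hcon
      have h4 : A.card ≤ (A ∩ B).card := by omega
      have h5 : B.card ≤ (B ∩ A).card := by omega
      have hAeq : A ∩ B = A := Finset.eq_of_subset_of_card_le Finset.inter_subset_left h4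
      have hBeq : B ∩ A = B := Finset.eq_of_subset_of_card_le Finset.inter_subset_left h5
      exact hABne (by rw [← hAeq, Finset.inter_comm, hBeq])
    have hcardD : D.card = (A \ B).card + (B \ A).card :=
      Finset.card_union_of_disjoint disjoint_sdiff_sdiff
    have hk2 : 2 ≤ D.card := by omega
    have hk8 : D.card ≤ 8 := by omega
    -- the enumeration of D
    set k := D.card with hkdef
    set e : Fin k ≃o {x // x ∈ D} := D.orderIsoOfFin rfl with hedef
    set d : Fin k → ℕ := fun j => (e j : ℕ) with hddef
    have hmono : StrictMono d := fun a b hab => Subtype.coe_lt_coe.mpr (e.strictMono hab)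
    have hdT : ∀ j, d j < T := fun j => Finset.mem_range.mp (hDsub (e j).2)
    refine ⟨k, by omega, by omega, ?_⟩
    refine aux_pcorr_eq s T k d hmono hdT ?_
    intro n
    have hcast : ((∑ j : Fin k, (s (n + d j)).val : ℕ) : ZMod 2) = 0 := by
      push_cast
      calc ∑ j : Fin k, ((s (n + d j)).val : ZMod 2)
          = ∑ j : Fin k, s (n + d j) :=
            Finset.sum_congr rfl fun j _ => ZMod.natCast_rightInverse _
        _ = ∑ x : {y // y ∈ D}, s (n + (x : ℕ)) :=
            Fintype.sum_equiv e.toEquiv _ _ (fun j => rfl)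
        _ = ∑ e ∈ D, s (n + e) := Finset.sum_coe_sort D (fun e => s (n + e))
        _ = 0 := hDzero n
    rw [ZMod.natCast_eq_zero_iff] at hcast
    exact even_iff_two_dvd.mpr hcast
end

section
/- Let ℓ ≥ 5 be an integer and S a (2^ℓ − 1)-periodic binary sequence whose linear complexity is at most 3ℓ (as is the case for 3-term trace sequences). Then there exists an integer k with 1 < k ≤ 9 such that S has a full peak in the periodic correlation measure of order k, i.e. θ_k(S) = 2^ℓ − 1. -/
open Finset

lemma detz (L : ℕ) (c : Fin L → ZMod 2) (t : ℕ → ZMod 2)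
    (hrec : ∀ i, t (i + L) = ∑ j : Fin L, c j * t (i + j))
    (hz : ∀ n < L, t n = 0) : ∀ n, t n = 0 := by
  intro n
  induction n using Nat.strong_induction_on with
  | _ n ih =>
    rcases lt_or_ge n L with h | h
    · exact hz n h
    · have hn : n = (n - L) + L := by omega
      rw [hn, hrec]
      apply Finset.sum_eq_zero
      intro j _
      rw [ih ((n - L) + j) (by omega), mul_zero]

lemma pcorr_full (s : ℕ → ZMod 2) (T k : ℕ) (d : Fin k → ℕ)
    (hmono : StrictMono d) (hlt : ∀ j, d j < T)
    (hzero : ∀ n < T, ∑ j : Fin k, s (n + d j) = 0) :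
    pcorr s T k = T := by
  have hval : ∀ n < T, (∑ n_1 : Fin k, (s (n + d n_1)).val) % 2 = 0 := by
    intro n hn
    have : ((∑ j : Fin k, (s (n + d j)).val : ℕ) : ZMod 2) = 0 := by
      push_cast
      rw [← hzero n hn]
      apply Finset.sum_congr rfl
      intro j _
      simp [ZMod.natCast_val, ZMod.cast_id]
    rw [ZMod.natCast_eq_zero_iff] at this
    omega
  have hmem : (T : ℕ) ∈ {m : ℕ | ∃ d : Fin k → ℕ, StrictMono d ∧ (∀ j, d j < T) ∧
      m = (∑ n ∈ range T, (-1 : ℤ) ^ (∑ j : Fin k, (s (n + d j)).val)).natAbs} := by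
    refine ⟨d, hmono, hlt, ?_⟩
    have : ∀ n ∈ range T, (-1 : ℤ) ^ (∑ j : Fin k, (s (n + d j)).val) = 1 := by
      intro n hn
      rw [mem_range] at hn
      exact Even.neg_one_pow (Nat.even_iff.mpr (hval n hn))
    rw [Finset.sum_congr rfl this]
    simp
  have hbdd : ∀ m ∈ {m : ℕ | ∃ d : Fin k → ℕ, StrictMono d ∧ (∀ j, d j < T) ∧
      m = (∑ n ∈ range T, (-1 : ℤ) ^ (∑ j : Fin k, (s (n + d j)).val)).natAbs}, m ≤ T := by
    rintro m ⟨d', -, -, rfl⟩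
    have h1 : |∑ n ∈ range T, (-1 : ℤ) ^ (∑ j : Fin k, (s (n + d' j)).val)| ≤ (T : ℤ) := by
      refine le_trans (Finset.abs_sum_le_sum_abs _ _) ?_
      have : ∀ n ∈ range T, |(-1 : ℤ) ^ (∑ j : Fin k, (s (n + d' j)).val)| = 1 := by
        intro n _
        rw [abs_pow, abs_neg, abs_one, one_pow]
      rw [Finset.sum_congr rfl this]
      simp
    rw [Int.abs_eq_natAbs] at h1
    exact_mod_cast h1
  unfold pcorr
  exact le_antisymm (csSup_le ⟨T, hmem⟩ hbdd) (le_csSup ⟨T, hbdd⟩ hmem)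

lemma countC (ℓ : ℕ) (hℓ : 5 ≤ ℓ) :
    2 ^ (3 * ℓ) < (2 ^ ℓ - 1).choose 3 + (2 ^ ℓ - 1).choose 4 := by
  rcases Nat.lt_or_ge ℓ 6 with h6 | h6
  · have : ℓ = 5 := by omega
    subst this
    decide
  · have hx : (64 : ℕ) ≤ 2 ^ ℓ := by
      calc (64 : ℕ) = 2 ^ 6 := by norm_num
        _ ≤ 2 ^ ℓ := Nat.pow_le_pow_right (by norm_num) h6
    have h24 : 24 * (2 ^ ℓ - 1).choose 4 = (2 ^ ℓ - 1).descFactorial 4 := by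
      rw [Nat.descFactorial_eq_factorial_mul_choose]
      norm_num [Nat.factorial]
    obtain ⟨y, hy⟩ : ∃ y, 2 ^ ℓ = y + 64 := ⟨2 ^ ℓ - 64, by omega⟩
    have hdesc : (2 ^ ℓ - 1).descFactorial 4 = (y + 60) * ((y + 61) * ((y + 62) * (y + 63))) := by
      simp [Nat.descFactorial, hy]
    have key : 24 * 2 ^ (3 * ℓ) < 24 * (2 ^ ℓ - 1).choose 4 := by
      rw [h24, hdesc]
      have e1 : 2 ^ (3 * ℓ) = (y + 64) * ((y + 64) * (y + 64)) := by
        rw [mul_comm 3 ℓ, pow_mul, hy]; ring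
      rw [e1]
      nlinarith [sq_nonneg y, Nat.zero_le y]
    have : 2 ^ (3 * ℓ) < (2 ^ ℓ - 1).choose 4 := by omega
    omega

/-- **3-term trace sequences.** For `ℓ ≥ 5`, a `(2^ℓ - 1)`-periodic binary sequence with
linear complexity at most `3ℓ` has a full peak in the periodic correlation measure of some
order `k` with `1 < k ≤ 9`. -/
theorem three_term_trace_peak (ℓ : ℕ) (hℓ : 5 ≤ ℓ) (s : ℕ → ZMod 2)
    (hper : ∀ i, s (i + (2 ^ ℓ - 1)) = s i)
    (hL : linComplexity s (2 * (2 ^ ℓ - 1)) ≤ 3 * ℓ) :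
    ∃ k, 1 < k ∧ k ≤ 9 ∧ pcorr s (2 ^ ℓ - 1) k = 2 ^ ℓ - 1 := by
  set T := 2 ^ ℓ - 1 with hTdef
  have hT32 : 31 ≤ T := by
    have : (2 : ℕ) ^ 5 ≤ 2 ^ ℓ := Nat.pow_le_pow_right (by norm_num) hℓ
    omega
  have h3ℓT : 3 * ℓ ≤ T := by
    have key : ∀ m, 5 ≤ m → 3 * m + 1 ≤ 2 ^ m := by
      intro m hm
      induction m, hm using Nat.le_induction with
      | base => norm_num
      | succ n hn ih =>
        have : (4 : ℕ) ≤ 2 ^ n := by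
          calc (4 : ℕ) = 2 ^ 2 := by norm_num
            _ ≤ 2 ^ n := Nat.pow_le_pow_right (by norm_num) (by omega)
        rw [pow_succ]
        omega
    have := key ℓ hℓ
    omega
  have hperm : ∀ m i, s (i + m * T) = s i := by
    intro m
    induction m with
    | zero => simp
    | succ m ih =>
      intro i
      have e : i + (m + 1) * T = (i + m * T) + T := by ring
      rw [e, hper, ih]
  by_cases hz : ∀ i < 2 * T, s i = 0
  · refine ⟨2, one_lt_two, by norm_num, ?_⟩
    apply pcorr_full s T 2 (fun j => (j : ℕ))
    · exact fun a b hab => hab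
    · intro j; have := j.isLt; omega
    · intro n hn
      rw [Fin.sum_univ_two]
      have e0 : ((0 : Fin 2) : ℕ) = 0 := rfl
      have e1 : ((1 : Fin 2) : ℕ) = 1 := rfl
      rw [e0, e1, hz (n + 0) (by omega), hz (n + 1) (by omega), add_zero]
  · unfold linComplexity at hL
    rw [if_neg hz] at hL
    have hne : {L | 0 < L ∧ IsLinRecOn s (2 * T) L}.Nonempty :=
      ⟨2 * T, by omega, ⟨fun _ => 0, fun i hi => absurd hi (by omega)⟩⟩
    have hmem := Nat.sInf_mem hne
    set L := sInf {L | 0 < L ∧ IsLinRecOn s (2 * T) L} with hLdef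
    obtain ⟨hLpos, hrec'⟩ := hmem
    obtain ⟨c, hrec⟩ := hrec'
    -- full recurrence
    have hfull : ∀ i, s (i + L) = ∑ j : Fin L, c j * s (i + (j : ℕ)) := by
      intro i
      obtain ⟨m, i₀, hi₀, rfl⟩ : ∃ m i₀, i₀ < T ∧ i = i₀ + m * T := by
        refine ⟨i / T, i % T, Nat.mod_lt _ (by omega), ?_⟩
        rw [Nat.mod_add_div']
      have e1 : i₀ + m * T + L = (i₀ + L) + m * T := by ring
      rw [e1, hperm, hrec i₀ (by omega)]
      apply Finset.sum_congr rfl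
      intro j _
      have e2 : i₀ + m * T + (j : ℕ) = (i₀ + (j : ℕ)) + m * T := by ring
      rw [e2, hperm]
    have hTpos : 0 < T := by omega
    -- pigeonhole
    set Φ : Finset (Fin T) → (Fin L → ZMod 2) :=
      fun D => fun j => ∑ d ∈ D, s ((j : ℕ) + (d : ℕ)) with hΦ
    set A : Finset (Finset (Fin T)) :=
      (univ : Finset (Fin T)).powersetCard 3 ∪ (univ : Finset (Fin T)).powersetCard 4 with hA
    have hcardA : (univ : Finset (Fin L → ZMod 2)).card < A.card := by
      have hdisj : Disjoint ((univ : Finset (Fin T)).powersetCard 3)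
          ((univ : Finset (Fin T)).powersetCard 4) := by
        rw [Finset.disjoint_left]
        intro D h3 h4
        rw [Finset.mem_powersetCard] at h3 h4
        omega
      rw [hA, Finset.card_union_of_disjoint hdisj, Finset.card_powersetCard,
        Finset.card_powersetCard]
      rw [show #(univ : Finset (Fin T)) = T from by simp]
      rw [show #(univ : Finset (Fin L → ZMod 2)) = 2 ^ L from by
        rw [card_univ, Fintype.card_fun]; simp]
      calc 2 ^ L ≤ 2 ^ (3 * ℓ) := Nat.pow_le_pow_right (by norm_num) hL
        _ < T.choose 3 + T.choose 4 := countC ℓ hℓ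
    obtain ⟨D1, hD1, D2, hD2, hne12, heq⟩ :=
      Finset.exists_ne_map_eq_of_card_lt_of_maps_to hcardA (fun D _ => mem_univ (Φ D))
    -- symmetric difference
    set E : Finset (Fin T) := (D1 \ D2) ∪ (D2 \ D1) with hE
    have hEne : E.Nonempty := by
      rw [Finset.nonempty_iff_ne_empty]
      intro h
      rw [hE, Finset.union_eq_empty] at h
      exact hne12 (Finset.Subset.antisymm
        (Finset.sdiff_eq_empty_iff_subset.mp h.1)
        (Finset.sdiff_eq_empty_iff_subset.mp h.2))
    have hcard4 : ∀ D ∈ A, D.card ≤ 4 := by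
      intro D hD
      rw [hA, Finset.mem_union, Finset.mem_powersetCard, Finset.mem_powersetCard] at hD
      omega
    have hEcard : E.card ≤ 8 := by
      calc E.card ≤ (D1 \ D2).card + (D2 \ D1).card := Finset.card_union_le _ _
        _ ≤ D1.card + D2.card := by
            have h1 : (D1 \ D2).card ≤ D1.card := Finset.card_le_card (Finset.sdiff_subset)
            have h2 : (D2 \ D1).card ≤ D2.card := Finset.card_le_card (Finset.sdiff_subset)
            omega
        _ ≤ 8 := by
            have := hcard4 D1 hD1
            have := hcard4 D2 hD2
            omega
    -- E sum vanishes on first L entries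
    have hE0 : ∀ j : Fin L, ∑ d ∈ E, s ((j : ℕ) + (d : ℕ)) = 0 := by
      intro j
      have h12 : Φ D1 j = Φ D2 j := congrFun heq j
      set f : Fin T → ZMod 2 := fun d => s ((j : ℕ) + (d : ℕ)) with hf
      have hs1 : ∑ d ∈ D1 \ D2, f d + ∑ d ∈ D1 ∩ D2, f d = ∑ d ∈ D1, f d := by
        rw [← Finset.sum_union (Finset.disjoint_sdiff_inter _ _), Finset.sdiff_union_inter]
      have hs2 : ∑ d ∈ D2 \ D1, f d + ∑ d ∈ D1 ∩ D2, f d = ∑ d ∈ D2, f d := by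
        rw [Finset.inter_comm]
        rw [← Finset.sum_union (Finset.disjoint_sdiff_inter _ _), Finset.sdiff_union_inter]
      have hkey : ∑ d ∈ D1 \ D2, f d = ∑ d ∈ D2 \ D1, f d := by
        have h12' : ∑ d ∈ D1, f d = ∑ d ∈ D2, f d := h12
        have := hs1.trans (h12'.trans hs2.symm)
        exact add_right_cancel this
      have hdisj' : Disjoint (D1 \ D2) (D2 \ D1) := by
        rw [Finset.disjoint_left]
        intro a ha hb
        rw [Finset.mem_sdiff] at ha hb
        exact hb.2 ha.1
      rw [hE, Finset.sum_union hdisj']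
      show (∑ d ∈ D1 \ D2, f d) + (∑ d ∈ D2 \ D1, f d) = 0
      rw [hkey]
      have : ∀ x : ZMod 2, x + x = 0 := by decide
      exact this _
    set t : ℕ → ZMod 2 := fun n => ∑ d ∈ E, s (n + (d : ℕ)) with ht
    have htrec : ∀ i, t (i + L) = ∑ j : Fin L, c j * t (i + (j : ℕ)) := by
      intro i
      calc t (i + L) = ∑ d ∈ E, s ((i + (d : ℕ)) + L) := by
            apply Finset.sum_congr rfl; intro d _; congr 1; ring
        _ = ∑ d ∈ E, ∑ j : Fin L, c j * s ((i + (d : ℕ)) + (j : ℕ)) := by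
            apply Finset.sum_congr rfl; intro d _; exact hfull _
        _ = ∑ j : Fin L, ∑ d ∈ E, c j * s ((i + (d : ℕ)) + (j : ℕ)) := Finset.sum_comm
        _ = ∑ j : Fin L, c j * t (i + (j : ℕ)) := by
            apply Finset.sum_congr rfl; intro j _
            rw [Finset.mul_sum]
            apply Finset.sum_congr rfl; intro d _
            congr 1
            ring
    have htall : ∀ n, t n = 0 := by
      apply detz L c t htrec
      intro n hn
      exact hE0 ⟨n, hn⟩
    rcases Nat.lt_or_ge 1 E.card with h2 | h1
    · -- card E ≥ 2
      refine ⟨E.card, h2, by omega, ?_⟩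
      set iso := E.orderIsoOfFin rfl with hiso
      apply pcorr_full s T E.card (fun j => ((iso j : Fin T) : ℕ))
      · intro a b hab
        have h' : iso a < iso b := iso.strictMono hab
        exact h'
      · intro j; exact (iso j : Fin T).isLt
      · intro n _
        have hn0 : ∑ d ∈ E, s (n + (d : ℕ)) = 0 := htall n
        calc ∑ j : Fin E.card, s (n + ((iso j : Fin T) : ℕ))
            = ∑ d : {x // x ∈ E}, s (n + ((d : Fin T) : ℕ)) :=
              Equiv.sum_comp iso.toEquiv (fun d : {x // x ∈ E} => s (n + ((d : Fin T) : ℕ)))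
          _ = ∑ d ∈ E, s (n + (d : ℕ)) := Finset.sum_coe_sort E (fun d : Fin T => s (n + (d : ℕ)))
          _ = 0 := hn0
    · -- card E = 1
      have hc1 : E.card = 1 := by
        have := Finset.card_pos.mpr hEne
        omega
      obtain ⟨e, he⟩ := Finset.card_eq_one.mp hc1
      have hse : ∀ n, s (n + (e : ℕ)) = 0 := by
        intro n
        have h0 : ∑ d ∈ E, s (n + (d : ℕ)) = 0 := htall n
        rw [he, Finset.sum_singleton] at h0
        exact h0
      have hs0 : ∀ m, s m = 0 := by
        intro m
        have h1 : s m = s (m + (e : ℕ) * T) := (hperm (e : ℕ) m).symm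
        have hle : (e : ℕ) ≤ (e : ℕ) * T := Nat.le_mul_of_pos_right _ hTpos
        have h2 : m + (e : ℕ) * T = (m + (e : ℕ) * T - (e : ℕ)) + (e : ℕ) := by omega
        rw [h1, h2, hse]
      refine ⟨2, one_lt_two, by norm_num, ?_⟩
      apply pcorr_full s T 2 (fun j => (j : ℕ))
      · exact fun a b hab => hab
      · intro j; have := j.isLt; omega
      · intro n _
        rw [Fin.sum_univ_two, hs0, hs0, add_zero]
end
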